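/- arXiv:2306.07217 — 11 statements merged into one kernel-verified Lean document; each statement's English description precedes it below -/
import Mathlib

section
/- Let 𝔤 be a Lie algebra over a field K, let V be a 𝔤-module with action denoted ρ, and let Θ : V → 𝔤 be a linear map satisfying the quadratic closure constraint Θ(ρ(Θ(u))(v)) = [Θ(u), Θ(v)] for all u, v ∈ V. Then the binary operation u ∘ v := ρ(Θ(u))(v) makes V a (left) Leibniz algebra, i.e. u ∘ (v ∘ w) = (u ∘ v) ∘ w + v ∘ (u ∘ w) for all u, v, w ∈ V. -/
/-- Let `𝔤` be a Lie algebra over a field `K`, `V` a `𝔤`-module, and `Θ : V → 𝔤` a linear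
map satisfying the quadratic closure constraint `Θ (Θ(u) ⬝ v) = [Θ u, Θ v]`.  Then the
binary operation `u ∘ v := Θ(u) ⬝ v = ⁅Θ u, v⁆` makes `V` a (left) Leibniz algebra. -/
theorem leibniz_of_embedding_tensor
    (K : Type*) [Field K]
    (g : Type*) [LieRing g] [LieAlgebra K g]
    (V : Type*) [AddCommGroup V] [Module K V]
    [LieRingModule g V] [LieModule K g V]
    (Θ : V →ₗ[K] g)
    (hclosure : ∀ u v : V, Θ ⁅Θ u, v⁆ = ⁅Θ u, Θ v⁆) :
    ∀ u v w : V, ⁅Θ u, ⁅Θ v, w⁆⁆ = ⁅Θ ⁅Θ u, v⁆, w⁆ + ⁅Θ v, ⁅Θ u, w⁆⁆ := by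
  intro u v w
  rw [hclosure, leibniz_lie]
end

section
/- Let (𝔈, ε₁, ε₂⁰, ε₂¹) be an hLie₂-algebra with ε₂¹ = 0. Then ε₂⁰ is graded antisymmetric, ε₂⁰(x,y) = −(−1)^{|x||y|} ε₂⁰(y,x) for all homogeneous x,y ∈ 𝔈, and (𝔈, ε₁, ε₂⁰) is a differential graded Lie algebra. -/
/-- The sign `(-1)^n` for `n : ℤ`, valued in the field `K`. -/
noncomputable def sgn (K : Type*) [Field K] (n : ℤ) : K :=
  ((Int.negOnePow n : ℤ) : K)

/-- An hLie₂-algebra structure on a graded vector space. -/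
structure IsHLie2 (K : Type*) [Field K] [CharZero K] {E : Type*}
    [AddCommGroup E] [Module K E] (G : ℤ → Submodule K E)
    (e1 : E →ₗ[K] E) (e2 : ℤ → E →ₗ[K] E →ₗ[K] E) : Prop where
  /-- `ε₂ⁱ = 0` for `i ∉ {0,1}`. -/
  e2_zero : ∀ i : ℤ, i ≠ 0 → i ≠ 1 → e2 i = 0
  /-- `ε₁` has degree `1`. -/
  e1_deg : ∀ (p : ℤ) (x : E), x ∈ G p → e1 x ∈ G (p + 1)
  /-- `ε₂ⁱ` has degree `-i`. -/
  e2_deg : ∀ (i p q : ℤ) (x y : E), x ∈ G p → y ∈ G q → e2 i x y ∈ G (p + q - i)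
  /-- (R1) -/
  rel1 : ∀ (p : ℤ) (x : E), x ∈ G p → e1 (e1 x) = 0
  /-- (R2) -/
  rel2 : ∀ (i : ℕ) (p q : ℤ) (x₁ x₂ : E), x₁ ∈ G p → x₂ ∈ G q →
    e1 (e2 (i : ℤ) x₁ x₂) =
      sgn K (i : ℤ) • (e2 (i : ℤ) (e1 x₁) x₂ + sgn K p • e2 (i : ℤ) x₁ (e1 x₂))
        + e2 ((i : ℤ) - 1) x₁ x₂ - sgn K ((i : ℤ) + p * q) • e2 ((i : ℤ) - 1) x₂ x₁
  /-- (R3) -/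
  rel3 : ∀ (i : ℕ) (p q r : ℤ) (x₁ x₂ x₃ : E), x₁ ∈ G p → x₂ ∈ G q → x₃ ∈ G r →
    e2 (i : ℤ) (e2 (i : ℤ) x₁ x₂) x₃ =
      sgn K ((i : ℤ) * (p + 1)) • e2 (i : ℤ) x₁ (e2 (i : ℤ) x₂ x₃)
        - sgn K ((p + (i : ℤ)) * q) • e2 (i : ℤ) x₂ (e2 (i : ℤ) x₁ x₃)
        - sgn K ((q + r) * p + ((i : ℤ) - 1) * q) •
            e2 ((i : ℤ) + 1) x₂ (e2 ((i : ℤ) - 1) x₃ x₁)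
  /-- (R4) -/
  rel4 : ∀ (i j : ℕ), j < i → ∀ (p q r : ℤ) (x₁ x₂ x₃ : E),
    x₁ ∈ G p → x₂ ∈ G q → x₃ ∈ G r →
    e2 (j : ℤ) (e2 (i : ℤ) x₁ x₂) x₃ =
      sgn K (1 + (j : ℤ) * ((i : ℤ) + 1) + p * (q + r) + ((j : ℤ) - 1) * q) •
        e2 ((i : ℤ) + 1) x₂ (e2 ((j : ℤ) - 1) x₃ x₁)
  /-- (R5) -/
  rel5 : ∀ (i j : ℕ), j < i → ∀ (p q r : ℤ) (x₁ x₂ x₃ : E),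
    x₁ ∈ G p → x₂ ∈ G q → x₃ ∈ G r →
    e2 (i : ℤ) (e2 (j : ℤ) x₁ x₂) x₃ =
      sgn K ((i : ℤ) * ((j : ℤ) + p)) • e2 (j : ℤ) x₁ (e2 (i : ℤ) x₂ x₃)
        - sgn K ((p + (j : ℤ)) * q) • e2 (i : ℤ) x₂ (e2 (j : ℤ) x₁ x₃)
        - sgn K ((j : ℤ) + r * ((j : ℤ) + q - 1) + p * (q + r)) •
            e2 ((i : ℤ) + 1) x₃ (e2 ((j : ℤ) - 1) x₂ x₁)

/-- A differential graded Lie algebra structure on a graded vector space. -/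
structure IsDGLA (K : Type*) [Field K] {V : Type*} [AddCommGroup V] [Module K V]
    (G : ℤ → Submodule K V) (d : V →ₗ[K] V) (br : V →ₗ[K] V →ₗ[K] V) : Prop where
  d_deg : ∀ (p : ℤ) (x : V), x ∈ G p → d x ∈ G (p + 1)
  d_sq : ∀ (p : ℤ) (x : V), x ∈ G p → d (d x) = 0
  br_deg : ∀ (p q : ℤ) (x y : V), x ∈ G p → y ∈ G q → br x y ∈ G (p + q)
  antisym : ∀ (p q : ℤ) (x y : V), x ∈ G p → y ∈ G q →
    br x y = - (sgn K (p * q) • br y x)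
  jacobi : ∀ (p q r : ℤ) (x y z : V), x ∈ G p → y ∈ G q → z ∈ G r →
    br x (br y z) = br (br x y) z + sgn K (p * q) • br y (br x z)
  leibniz : ∀ (p q : ℤ) (x y : V), x ∈ G p → y ∈ G q →
    d (br x y) = br (d x) y + sgn K p • br x (d y)

private lemma sgn_zero' (K : Type*) [Field K] : sgn K 0 = 1 := by simp [sgn]

private lemma sgn_one_add (K : Type*) [Field K] (m : ℤ) : sgn K (1 + m) = - sgn K m := by
  simp [sgn, Int.negOnePow_add]

/-- If `(𝔈, ε₁, ε₂⁰, ε₂¹)` is an hLie₂-algebra with `ε₂¹ = 0`, then `ε₂⁰` is graded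
antisymmetric and `(𝔈, ε₁, ε₂⁰)` is a differential graded Lie algebra. -/
theorem dgla_of_hLie2_trivial_alternator
    (K : Type*) [Field K] [CharZero K] {E : Type*} [AddCommGroup E] [Module K E]
    (G : ℤ → Submodule K E) (e1 : E →ₗ[K] E) (e2 : ℤ → E →ₗ[K] E →ₗ[K] E)
    (hE : IsHLie2 K G e1 e2) (h21 : e2 1 = 0) :
    (∀ (p q : ℤ) (x y : E), x ∈ G p → y ∈ G q →
      e2 0 x y = - (sgn K (p * q) • e2 0 y x))
    ∧ IsDGLA K G e1 (e2 0) := by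
  have h2m1 : e2 (-1) = 0 := hE.e2_zero (-1) (by decide) (by decide)
  have antisym : ∀ (p q : ℤ) (x y : E), x ∈ G p → y ∈ G q →
      e2 0 x y = - (sgn K (p * q) • e2 0 y x) := by
    intro p q x y hx hy
    have h := hE.rel2 1 p q x y hx hy
    simp only [Nat.cast_one, h21, LinearMap.zero_apply, map_zero, smul_zero, add_zero,
      zero_add, sub_self, smul_add] at h
    have h' : (0 : E) = e2 0 x y - sgn K (1 + p * q) • e2 0 y x := by
      simpa using h
    rw [sgn_one_add, neg_smul, sub_neg_eq_add] at h'
    linear_combination (norm := module) -h'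
  refine ⟨antisym, ?_⟩
  constructor
  · exact hE.e1_deg
  · exact hE.rel1
  · intro p q x y hx hy
    simpa using hE.e2_deg 0 p q x y hx hy
  · exact antisym
  · intro p q r x y z hx hy hz
    have h := hE.rel3 0 q p r y x z hy hx hz
    simp only [Nat.cast_zero, zero_sub, h2m1, LinearMap.zero_apply, map_zero, smul_zero,
      sub_zero, zero_mul, zero_add, sgn_zero', one_smul] at h
    set s := sgn K (p * q) with hs_def
    have hs : s * s = 1 := by
      simp [hs_def, sgn, ← Int.cast_mul, ← Units.val_mul]
      rw [← mul_pow]; norm_num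
    have hqp : sgn K ((q + 0) * p) = s := by rw [hs_def]; ring_nf
    rw [hqp] at h
    have ha := antisym q p y x hy hx
    have hqp2 : sgn K (q * p) = s := by rw [hs_def, mul_comm]
    rw [hqp2] at ha
    rw [ha] at h
    simp only [map_neg, map_smul, LinearMap.neg_apply, LinearMap.smul_apply] at h
    have h2 := congrArg (fun v => s • v) h
    simp only [smul_neg, smul_sub, smul_smul, hs, one_smul] at h2
    linear_combination (norm := module) h2
  · intro p q x y hx hy
    have h := hE.rel2 0 p q x y hx hy
    simp only [Nat.cast_zero, zero_sub, h2m1, LinearMap.zero_apply, map_zero, smul_zero,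
      sub_zero, add_zero, sgn_zero', one_smul] at h
    exact h
end

section
/- Let 𝔤 be a (left) Leibniz algebra over a field of characteristic zero and let 𝔤^ann denote the linear span of all brackets [x,y], x,y ∈ 𝔤. Set E₋₁ := 𝔤^ann, E₀ := 𝔤, ε₁ := the inclusion 𝔤^ann ↪ 𝔤, ε₂(a,b) := [a,b] whenever at most one of a, b lies in E₋₁ (viewed inside 𝔤), ε₃ := 0, and alt(a,b) := [a,b] + [b,a] ∈ 𝔤^ann for a,b ∈ E₀. Then (E₋₁, E₀, ε₁, ε₂, ε₃, alt) is a 2-term E₂L∞-algebra. -/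
/-- A 2-term E₂L∞-algebra structure on a pair of vector spaces `Em1` (degree −1)
and `E0` (degree 0), with differential `e1`, binary products `e2` (on `E0 × E0`),
`e2r : E0 × Em1 → Em1`, `e2l : Em1 × E0 → Em1`, ternary product `e3` and
alternator `alt`. -/
structure Is2TermE2LInfty (K : Type*) [Field K] [CharZero K]
    {Em1 E0 : Type*} [AddCommGroup Em1] [Module K Em1] [AddCommGroup E0] [Module K E0]
    (e1 : Em1 → E0) (e2 : E0 → E0 → E0) (e2r : E0 → Em1 → Em1) (e2l : Em1 → E0 → Em1)
    (e3 : E0 → E0 → E0 → Em1) (alt : E0 → E0 → Em1) : Prop where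
  lin_e1 : IsLinearMap K e1
  lin_e2_left : ∀ y, IsLinearMap K fun x => e2 x y
  lin_e2_right : ∀ x, IsLinearMap K (e2 x)
  lin_e2r_left : ∀ y, IsLinearMap K fun x => e2r x y
  lin_e2r_right : ∀ x, IsLinearMap K (e2r x)
  lin_e2l_left : ∀ y, IsLinearMap K fun x => e2l x y
  lin_e2l_right : ∀ x, IsLinearMap K (e2l x)
  lin_e3_1 : ∀ y z, IsLinearMap K fun x => e3 x y z
  lin_e3_2 : ∀ x z, IsLinearMap K fun y => e3 x y z
  lin_e3_3 : ∀ x y, IsLinearMap K (e3 x y)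
  lin_alt_left : ∀ y, IsLinearMap K fun x => alt x y
  lin_alt_right : ∀ x, IsLinearMap K (alt x)
  /-- (E1) `ε₂` is a chain map. -/
  E1a : ∀ x y, e1 (e2r x y) = e2 x (e1 y)
  E1b : ∀ x y, e1 (e2l y x) = e2 (e1 y) x
  E1c : ∀ y₁ y₂, e2r (e1 y₁) y₂ = e2l y₁ (e1 y₂)
  /-- (E2) `alt` is a chain homotopy from `ε₂ + ε₂ ∘ σ₁₂` to `0`. -/
  E2a : ∀ x₁ x₂, e2 x₁ x₂ + e2 x₂ x₁ = e1 (alt x₁ x₂)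
  E2b : ∀ x y, e2r x y + e2l y x = alt x (e1 y)
  /-- (E3) `ε₃` is a chain homotopy from the Jacobiator expression to `0`. -/
  E3a : ∀ x₁ x₂ x₃,
    e2 x₁ (e2 x₂ x₃) - e2 (e2 x₁ x₂) x₃ - e2 x₂ (e2 x₁ x₃) = - e1 (e3 x₁ x₂ x₃)
  E3b : ∀ x₁ x₂ y,
    e2r x₁ (e2r x₂ y) - e2r (e2 x₁ x₂) y - e2r x₂ (e2r x₁ y) = - e3 x₁ x₂ (e1 y)
  E3c : ∀ x₁ y x₃,
    e2r x₁ (e2l y x₃) - e2l (e2r x₁ y) x₃ - e2l y (e2 x₁ x₃) = - e3 x₁ (e1 y) x₃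
  E3d : ∀ y x₂ x₃,
    e2l y (e2 x₂ x₃) - e2l (e2l y x₂) x₃ - e2r x₂ (e2l y x₃) = - e3 (e1 y) x₂ x₃
  /-- (E4) -/
  E4 : ∀ x₁ x₂, alt x₁ x₂ = alt x₂ x₁
  /-- (E5) -/
  E5 : ∀ x₁ x₂ x₃, e3 x₁ x₂ x₃ + e3 x₂ x₁ x₃ = e2l (alt x₁ x₂) x₃
  /-- (E6) -/
  E6 : ∀ x₁ x₂ x₃, e3 x₁ x₂ x₃ + e3 x₁ x₃ x₂ =
    alt (e2 x₁ x₂) x₃ + alt x₂ (e2 x₁ x₃) - e2r x₁ (alt x₂ x₃)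
  /-- (E7) -/
  E7 : ∀ x₁ x₂ x₃ x₄,
    e2r x₁ (e3 x₂ x₃ x₄) + e3 x₁ (e2 x₂ x₃) x₄ + e3 x₁ x₃ (e2 x₂ x₄)
      + e2l (e3 x₁ x₂ x₃) x₄ + e2r x₃ (e3 x₁ x₂ x₄)
    = e3 x₁ x₂ (e2 x₃ x₄) + e3 (e2 x₁ x₂) x₃ x₄ + e2r x₂ (e3 x₁ x₃ x₄)
      + e3 x₂ (e2 x₁ x₃) x₄ + e3 x₂ x₃ (e2 x₁ x₄)

/-- A 2-term L∞-algebra structure on vector spaces `Lm1` (degree −1) and `L0`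
(degree 0), with differential `m1`, antisymmetric binary product `m2` (on `L0 × L0`),
mixed product `m2r : L0 × Lm1 → Lm1` (with the convention `μ₂(y,x) = −μ₂(x,y)` for
`x : L0`, `y : Lm1`) and totally antisymmetric ternary product `m3`. -/
structure Is2TermLInfty (K : Type*) [Field K] [CharZero K]
    {Lm1 L0 : Type*} [AddCommGroup Lm1] [Module K Lm1] [AddCommGroup L0] [Module K L0]
    (m1 : Lm1 → L0) (m2 : L0 → L0 → L0) (m2r : L0 → Lm1 → Lm1)
    (m3 : L0 → L0 → L0 → Lm1) : Prop where
  lin_m1 : IsLinearMap K m1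
  lin_m2_left : ∀ y, IsLinearMap K fun x => m2 x y
  lin_m2_right : ∀ x, IsLinearMap K (m2 x)
  lin_m2r_left : ∀ y, IsLinearMap K fun x => m2r x y
  lin_m2r_right : ∀ x, IsLinearMap K (m2r x)
  lin_m3_1 : ∀ y z, IsLinearMap K fun x => m3 x y z
  lin_m3_2 : ∀ x z, IsLinearMap K fun y => m3 x y z
  lin_m3_3 : ∀ x y, IsLinearMap K (m3 x y)
  m2_antisym : ∀ x₁ x₂, m2 x₁ x₂ = - m2 x₂ x₁
  m3_antisym12 : ∀ x₁ x₂ x₃, m3 x₁ x₂ x₃ = - m3 x₂ x₁ x₃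
  m3_antisym23 : ∀ x₁ x₂ x₃, m3 x₁ x₂ x₃ = - m3 x₁ x₃ x₂
  /-- (L1) -/
  L1 : ∀ x y, m1 (m2r x y) = m2 x (m1 y)
  /-- (L2) -/
  L2 : ∀ y₁ y₂, m2r (m1 y₁) y₂ + m2r (m1 y₂) y₁ = 0
  /-- (L3) -/
  L3 : ∀ x₁ x₂ x₃,
    m2 x₁ (m2 x₂ x₃) + m2 x₂ (m2 x₃ x₁) + m2 x₃ (m2 x₁ x₂) = - m1 (m3 x₁ x₂ x₃)
  /-- (L4), written using `μ₂(y,x₁) = −m2r x₁ y` and `μ₂(y, μ₂(x₁,x₂)) = −m2r (m2 x₁ x₂) y`. -/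
  L4 : ∀ x₁ x₂ y,
    m2r x₁ (m2r x₂ y) - m2r x₂ (m2r x₁ y) - m2r (m2 x₁ x₂) y = - m3 x₁ x₂ (m1 y)
  /-- (L5), written using `μ₂(μ₃(·,·,·), x) = −m2r x (m3 · · ·)`. -/
  L5 : ∀ x₁ x₂ x₃ x₄,
    m3 (m2 x₁ x₂) x₃ x₄ - m3 (m2 x₁ x₃) x₂ x₄ + m3 (m2 x₁ x₄) x₂ x₃
      + m3 (m2 x₂ x₃) x₁ x₄ - m3 (m2 x₂ x₄) x₁ x₃ + m3 (m2 x₃ x₄) x₁ x₂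
    = - m2r x₄ (m3 x₁ x₂ x₃) + m2r x₃ (m3 x₁ x₂ x₄)
      - m2r x₂ (m3 x₁ x₃ x₄) + m2r x₁ (m3 x₂ x₃ x₄)


/-- The subspace `𝔤^ann = [𝔤,𝔤]`: the linear span of all brackets. -/
def leibAnn (K : Type*) [Field K] {V : Type*} [AddCommGroup V] [Module K V]
    (br : V →ₗ[K] V →ₗ[K] V) : Submodule K V :=
  Submodule.span K (Set.range fun p : V × V => br p.1 p.2)

lemma br_mem_leibAnn_right (K : Type*) [Field K] {V : Type*} [AddCommGroup V]
    [Module K V] (br : V →ₗ[K] V →ₗ[K] V) (x y : V) : br x y ∈ leibAnn K br :=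
  Submodule.subset_span ⟨(x, y), rfl⟩

lemma br_mem_leibAnn_left (K : Type*) [Field K] {V : Type*} [AddCommGroup V]
    [Module K V] (br : V →ₗ[K] V →ₗ[K] V)
    (hbr : ∀ x y z : V, br x (br y z) = br (br x y) z + br y (br x z))
    (x : V) {y : V} (hy : y ∈ leibAnn K br) : br x y ∈ leibAnn K br := by
  have h : Submodule.span K (Set.range fun p : V × V => br p.1 p.2) ≤
      (leibAnn K br).comap (br x) := by
    apply Submodule.span_le.mpr
    rintro _ ⟨⟨a, b⟩, rfl⟩
    simp only [SetLike.mem_coe, Submodule.mem_comap]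
    rw [hbr x a b]
    exact add_mem (br_mem_leibAnn_right K br _ _) (br_mem_leibAnn_right K br _ _)
  exact h hy

/-- Any (left) Leibniz algebra `𝔤` canonically induces a hemistrict 2-term E₂L∞-algebra
with `E₋₁ = 𝔤^ann = [𝔤,𝔤]`, `E₀ = 𝔤`, `ε₁` the inclusion, `ε₂` the bracket,
`ε₃ = 0` and `alt(a,b) = [a,b] + [b,a]`. -/
theorem leibniz_to_hemistrict_2term_E2LInfty
    (K : Type*) [Field K] [CharZero K] {V : Type*} [AddCommGroup V] [Module K V]
    (br : V →ₗ[K] V →ₗ[K] V)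
    (hbr : ∀ x y z : V, br x (br y z) = br (br x y) z + br y (br x z)) :
    Is2TermE2LInfty K (Em1 := ↥(leibAnn K br)) (E0 := V)
      (fun y => (y : V))
      (fun a b => br a b)
      (fun x y => ⟨br x (y : V), br_mem_leibAnn_left K br hbr x y.2⟩)
      (fun y x => ⟨br (y : V) x, br_mem_leibAnn_right K br _ _⟩)
      (fun _ _ _ => 0)
      (fun a b => ⟨br a b + br b a,
        add_mem (br_mem_leibAnn_right K br a b) (br_mem_leibAnn_right K br b a)⟩) := by
  have key : ∀ x y z : V, br (br x y + br y x) z = 0 := by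
    intro x y z
    have h1 := hbr x y z
    have h2 := hbr y x z
    have e1 : br (br x y) z = br x (br y z) - br y (br x z) := by rw [h1]; abel
    have e2 : br (br y x) z = br y (br x z) - br x (br y z) := by rw [h2]; abel
    rw [map_add, LinearMap.add_apply, e1, e2]; abel
  constructor
  case lin_e1 => exact ⟨fun a b => rfl, fun c a => rfl⟩
  case lin_e2_left => intro y; exact ⟨fun a b => by simp, fun c a => by simp⟩
  case lin_e2_right => intro x; exact ⟨fun a b => by simp, fun c a => by simp⟩
  case lin_e2r_left =>
    intro y
    exact ⟨fun a b => Subtype.ext (by simp), fun c a => Subtype.ext (by simp)⟩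
  case lin_e2r_right =>
    intro x
    exact ⟨fun a b => Subtype.ext (by simp), fun c a => Subtype.ext (by simp)⟩
  case lin_e2l_left =>
    intro y
    exact ⟨fun a b => Subtype.ext (by simp), fun c a => Subtype.ext (by simp)⟩
  case lin_e2l_right =>
    intro x
    exact ⟨fun a b => Subtype.ext (by simp), fun c a => Subtype.ext (by simp)⟩
  case lin_e3_1 => intro y z; exact ⟨fun a b => by simp, fun c a => by simp⟩
  case lin_e3_2 => intro x z; exact ⟨fun a b => by simp, fun c a => by simp⟩
  case lin_e3_3 => intro x y; exact ⟨fun a b => by simp, fun c a => by simp⟩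
  case lin_alt_left =>
    intro y
    refine ⟨fun a b => Subtype.ext ?_, fun c a => Subtype.ext ?_⟩ <;> simp <;> abel
  case lin_alt_right =>
    intro x
    refine ⟨fun a b => Subtype.ext ?_, fun c a => Subtype.ext ?_⟩ <;> simp <;> abel
  case E1a => intro x y; rfl
  case E1b => intro x y; rfl
  case E1c => intro y1 y2; exact Subtype.ext rfl
  case E2a => intro x1 x2; rfl
  case E2b => intro x y; exact Subtype.ext rfl
  case E3a =>
    intro x1 x2 x3
    simp only [ZeroMemClass.coe_zero, neg_zero]
    rw [hbr]; abel
  case E3b =>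
    intro x1 x2 y
    refine Subtype.ext ?_
    simp only [AddSubgroupClass.coe_sub, neg_zero, ZeroMemClass.coe_zero]
    rw [hbr]; abel
  case E3c =>
    intro x1 y x3
    refine Subtype.ext ?_
    simp only [AddSubgroupClass.coe_sub, neg_zero, ZeroMemClass.coe_zero]
    rw [hbr]; abel
  case E3d =>
    intro y x2 x3
    refine Subtype.ext ?_
    simp only [AddSubgroupClass.coe_sub, neg_zero, ZeroMemClass.coe_zero]
    rw [hbr]; abel
  case E4 =>
    intro x1 x2
    exact Subtype.ext (by simp; abel)
  case E5 =>
    intro x1 x2 x3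
    refine Subtype.ext ?_
    simp only [AddSubmonoid.coe_add, ZeroMemClass.coe_zero, add_zero, zero_add]
    rw [key]
  case E6 =>
    intro x1 x2 x3
    refine Subtype.ext ?_
    simp only [AddSubmonoid.coe_add, AddSubgroupClass.coe_sub, ZeroMemClass.coe_zero,
      add_zero, zero_add, map_add, Submodule.coe_add]
    rw [hbr x1 x2 x3, hbr x1 x3 x2]; abel
  case E7 =>
    intro x1 x2 x3 x4
    refine Subtype.ext ?_
    simp
end

section
/- Let (E₋₁, E₀, ε₁, ε₂, ε₃, alt) be a 2-term E₂L∞-algebra over a field of characteristic zero. Define μ₁ := ε₁, μ₂(x₁,x₂) := ½(ε₂(x₁,x₂) − ε₂(x₂,x₁)) for x₁,x₂ ∈ E₀, μ₂(x,y) := ½(ε₂(x,y) − ε₂(y,x)) for x ∈ E₀ and y ∈ E₋₁, and μ₃(x₁,x₂,x₃) := (1/6) Σ_{σ∈S₃} sgn(σ)·(ε₃(x_{σ(1)},x_{σ(2)},x_{σ(3)}) + ½ alt(ε₂(x_{σ(1)},x_{σ(2)}),x_{σ(3)})). Then (E₋₁, E₀, μ₁, μ₂, μ₃) is a 2-term L∞-algebra.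 -/
private lemma sum_perm_fin3' {M : Type*} [AddCommGroup M] (f : Equiv.Perm (Fin 3) → M) :
    ∑ σ : Equiv.Perm (Fin 3), f σ =
      f 1 + f (Equiv.swap 0 1) + f (Equiv.swap 0 2) + f (Equiv.swap 1 2)
        + f (Equiv.swap 0 1 * Equiv.swap 1 2) + f (Equiv.swap 1 2 * Equiv.swap 0 1) := by
  rw [show (Finset.univ : Finset (Equiv.Perm (Fin 3))) =
      {1, Equiv.swap 0 1, Equiv.swap 0 2, Equiv.swap 1 2,
       Equiv.swap 0 1 * Equiv.swap 1 2, Equiv.swap 1 2 * Equiv.swap 0 1} by decide]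
  rw [Finset.sum_insert (by decide), Finset.sum_insert (by decide),
    Finset.sum_insert (by decide), Finset.sum_insert (by decide),
    Finset.sum_insert (by decide), Finset.sum_singleton]
  abel

set_option maxHeartbeats 4000000 in

/-- Antisymmetrisation of a 2-term E₂L∞-algebra: the formulas
`μ₁ := ε₁`, `μ₂(x₁,x₂) := ½(ε₂(x₁,x₂) − ε₂(x₂,x₁))`,
`μ₂(x,y) := ½(ε₂(x,y) − ε₂(y,x))` and
`μ₃(x₁,x₂,x₃) := (1/6) Σ_{σ∈S₃} sgn(σ)·(ε₃(x_{σ(1)},x_{σ(2)},x_{σ(3)})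
  + ½ alt(ε₂(x_{σ(1)},x_{σ(2)}),x_{σ(3)}))`
yield a 2-term L∞-algebra. -/
theorem antisymmetrisation_of_2term_E2LInfty
    (K : Type*) [Field K] [CharZero K]
    {Em1 E0 : Type*} [AddCommGroup Em1] [Module K Em1] [AddCommGroup E0] [Module K E0]
    (e1 : Em1 → E0) (e2 : E0 → E0 → E0) (e2r : E0 → Em1 → Em1) (e2l : Em1 → E0 → Em1)
    (e3 : E0 → E0 → E0 → Em1) (alt : E0 → E0 → Em1)
    (h : Is2TermE2LInfty K e1 e2 e2r e2l e3 alt) :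
    Is2TermLInfty K e1
      (fun x₁ x₂ => (2 : K)⁻¹ • (e2 x₁ x₂ - e2 x₂ x₁))
      (fun x y => (2 : K)⁻¹ • (e2r x y - e2l y x))
      (fun x₁ x₂ x₃ => (6 : K)⁻¹ • ∑ σ : Equiv.Perm (Fin 3),
        ((Equiv.Perm.sign σ : ℤ)) •
          (e3 (![x₁, x₂, x₃] (σ 0)) (![x₁, x₂, x₃] (σ 1)) (![x₁, x₂, x₃] (σ 2))
            + (2 : K)⁻¹ •
              alt (e2 (![x₁, x₂, x₃] (σ 0)) (![x₁, x₂, x₃] (σ 1)))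
                (![x₁, x₂, x₃] (σ 2)))) := by
  obtain ⟨l1, l2L, l2R, l2rL, l2rR, l2lL, l2lR, l31, l32, l33, laL, laR,
    hE1a, hE1b, hE1c, hE2a, hE2b, hE3a, hE3b, hE3c, hE3d, hE4, hE5, hE6, hE7⟩ := h

  have e1A : ∀ u v, e1 (u + v) = e1 u + e1 v := l1.map_add
  have e1S : ∀ (c : K) u, e1 (c • u) = c • e1 u := l1.map_smul
  have e1Sub : ∀ u v, e1 (u - v) = e1 u - e1 v := l1.map_sub
  have e1N : ∀ u, e1 (-u) = - e1 u := l1.map_neg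
  have e2Al : ∀ u v w, e2 (u + v) w = e2 u w + e2 v w := fun u v w => (l2L w).map_add u v
  have e2Sl : ∀ (c : K) u w, e2 (c • u) w = c • e2 u w := fun c u w => (l2L w).map_smul c u
  have e2Subl : ∀ u v w, e2 (u - v) w = e2 u w - e2 v w := fun u v w => (l2L w).map_sub u v
  have e2Nl : ∀ u w, e2 (-u) w = - e2 u w := fun u w => (l2L w).map_neg u
  have e2Ar : ∀ w u v, e2 w (u + v) = e2 w u + e2 w v := fun w u v => (l2R w).map_add u v
  have e2Sr : ∀ w (c : K) u, e2 w (c • u) = c • e2 w u := fun w c u => (l2R w).map_smul c u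
  have e2Subr : ∀ w u v, e2 w (u - v) = e2 w u - e2 w v := fun w u v => (l2R w).map_sub u v
  have e2Nr : ∀ w u, e2 w (-u) = - e2 w u := fun w u => (l2R w).map_neg u
  have e2rAl : ∀ u v w, e2r (u + v) w = e2r u w + e2r v w := fun u v w => (l2rL w).map_add u v
  have e2rSl : ∀ (c : K) u w, e2r (c • u) w = c • e2r u w := fun c u w => (l2rL w).map_smul c u
  have e2rSubl : ∀ u v w, e2r (u - v) w = e2r u w - e2r v w := fun u v w => (l2rL w).map_sub u v
  have e2rNl : ∀ u w, e2r (-u) w = - e2r u w := fun u w => (l2rL w).map_neg u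
  have e2rAr : ∀ w u v, e2r w (u + v) = e2r w u + e2r w v := fun w u v => (l2rR w).map_add u v
  have e2rSr : ∀ w (c : K) u, e2r w (c • u) = c • e2r w u := fun w c u => (l2rR w).map_smul c u
  have e2rSubr : ∀ w u v, e2r w (u - v) = e2r w u - e2r w v := fun w u v => (l2rR w).map_sub u v
  have e2rNr : ∀ w u, e2r w (-u) = - e2r w u := fun w u => (l2rR w).map_neg u
  have e2lAl : ∀ u v w, e2l (u + v) w = e2l u w + e2l v w := fun u v w => (l2lL w).map_add u v
  have e2lSl : ∀ (c : K) u w, e2l (c • u) w = c • e2l u w := fun c u w => (l2lL w).map_smul c u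
  have e2lSubl : ∀ u v w, e2l (u - v) w = e2l u w - e2l v w := fun u v w => (l2lL w).map_sub u v
  have e2lNl : ∀ u w, e2l (-u) w = - e2l u w := fun u w => (l2lL w).map_neg u
  have e2lAr : ∀ w u v, e2l w (u + v) = e2l w u + e2l w v := fun w u v => (l2lR w).map_add u v
  have e2lSr : ∀ w (c : K) u, e2l w (c • u) = c • e2l w u := fun w c u => (l2lR w).map_smul c u
  have e2lSubr : ∀ w u v, e2l w (u - v) = e2l w u - e2l w v := fun w u v => (l2lR w).map_sub u v
  have e2lNr : ∀ w u, e2l w (-u) = - e2l w u := fun w u => (l2lR w).map_neg u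
  have altAl : ∀ u v w, alt (u + v) w = alt u w + alt v w := fun u v w => (laL w).map_add u v
  have altSl : ∀ (c : K) u w, alt (c • u) w = c • alt u w := fun c u w => (laL w).map_smul c u
  have altSubl : ∀ u v w, alt (u - v) w = alt u w - alt v w := fun u v w => (laL w).map_sub u v
  have altNl : ∀ u w, alt (-u) w = - alt u w := fun u w => (laL w).map_neg u
  have altAr : ∀ w u v, alt w (u + v) = alt w u + alt w v := fun w u v => (laR w).map_add u v
  have altSr : ∀ w (c : K) u, alt w (c • u) = c • alt w u := fun w c u => (laR w).map_smul c u
  have altSubr : ∀ w u v, alt w (u - v) = alt w u - alt w v := fun w u v => (laR w).map_sub u v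
  have altNr : ∀ w u, alt w (-u) = - alt w u := fun w u => (laR w).map_neg u
  have e3A1 : ∀ u v a b, e3 (u + v) a b = e3 u a b + e3 v a b := fun u v a b => (l31 a b).map_add u v
  have e3S1 : ∀ (c : K) u a b, e3 (c • u) a b = c • e3 u a b := fun c u a b => (l31 a b).map_smul c u
  have e3Sub1 : ∀ u v a b, e3 (u - v) a b = e3 u a b - e3 v a b := fun u v a b => (l31 a b).map_sub u v
  have e3N1 : ∀ u a b, e3 (-u) a b = - e3 u a b := fun u a b => (l31 a b).map_neg u
  have e3A2 : ∀ a u v b, e3 a (u + v) b = e3 a u b + e3 a v b := fun a u v b => (l32 a b).map_add u v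
  have e3S2 : ∀ a (c : K) u b, e3 a (c • u) b = c • e3 a u b := fun a c u b => (l32 a b).map_smul c u
  have e3Sub2 : ∀ a u v b, e3 a (u - v) b = e3 a u b - e3 a v b := fun a u v b => (l32 a b).map_sub u v
  have e3N2 : ∀ a u b, e3 a (-u) b = - e3 a u b := fun a u b => (l32 a b).map_neg u
  have e3A3 : ∀ a b u v, e3 a b (u + v) = e3 a b u + e3 a b v := fun a b u v => (l33 a b).map_add u v
  have e3S3 : ∀ a b (c : K) u, e3 a b (c • u) = c • e3 a b u := fun a b c u => (l33 a b).map_smul c u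
  have e3Sub3 : ∀ a b u v, e3 a b (u - v) = e3 a b u - e3 a b v := fun a b u v => (l33 a b).map_sub u v
  have e3N3 : ∀ a b u, e3 a b (-u) = - e3 a b u := fun a b u => (l33 a b).map_neg u

  have m3eq : ∀ a b c : E0,
      ((6 : K)⁻¹ • ∑ σ : Equiv.Perm (Fin 3),
        ((Equiv.Perm.sign σ : ℤ)) •
          (e3 (![a, b, c] (σ 0)) (![a, b, c] (σ 1)) (![a, b, c] (σ 2))
            + (2 : K)⁻¹ •
              alt (e2 (![a, b, c] (σ 0)) (![a, b, c] (σ 1)))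
                (![a, b, c] (σ 2)))) =
      (6 : K)⁻¹ • ((e3 a b c + (2:K)⁻¹ • alt (e2 a b) c)
        - (e3 b a c + (2:K)⁻¹ • alt (e2 b a) c)
        - (e3 c b a + (2:K)⁻¹ • alt (e2 c b) a)
        - (e3 a c b + (2:K)⁻¹ • alt (e2 a c) b)
        + (e3 b c a + (2:K)⁻¹ • alt (e2 b c) a)
        + (e3 c a b + (2:K)⁻¹ • alt (e2 c a) b)) := by
    intro a b c
    rw [sum_perm_fin3']
    norm_num [Equiv.swap_apply_def, Equiv.Perm.sign_swap, Fin.ext_iff]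
    simp only [Matrix.cons_val]
    module
  have cE3aL : ∀ a b c d, alt (e2 a (e2 b c)) d - alt (e2 (e2 a b) c) d - alt (e2 b (e2 a c)) d
      = - alt (e1 (e3 a b c)) d := by
    intro a b c d
    rw [← altSubl, ← altSubl, hE3a, altNl]
  have cE3aR : ∀ d a b c, alt d (e2 a (e2 b c)) - alt d (e2 (e2 a b) c) - alt d (e2 b (e2 a c))
      = - alt d (e1 (e3 a b c)) := by
    intro d a b c
    rw [← altSubr, ← altSubr, hE3a, altNr]
  have cE2aL : ∀ u v w, alt (e2 u v) w + alt (e2 v u) w = alt (e1 (alt u v)) w := by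
    intro u v w
    rw [← altAl, hE2a]
  have cE2aR : ∀ w u v, alt w (e2 u v) + alt w (e2 v u) = alt w (e1 (alt u v)) := by
    intro w u v
    rw [← altAr, hE2a]
  have cE1aL : ∀ a yy b, alt (e1 (e2r a yy)) b = alt (e2 a (e1 yy)) b := by
    intro a yy b; rw [hE1a]
  have cE1bL : ∀ yy a b, alt (e1 (e2l yy a)) b = alt (e2 (e1 yy) a) b := by
    intro yy a b; rw [hE1b]
  refine ⟨l1, ?_, ?_, ?_, ?_, ?_, ?_, ?_, ?_, ?_, ?_, ?_, ?_, ?_, ?_, ?_⟩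
  · -- lin_m2_left
    intro w
    refine ⟨fun a b => ?_, fun c a => ?_⟩ <;> · simp only [e1A, e1S, e1Sub, e1N, e2Al, e2Sl, e2Subl, e2Nl, e2Ar, e2Sr, e2Subr, e2Nr, e2rAl, e2rSl, e2rSubl, e2rNl, e2rAr, e2rSr, e2rSubr, e2rNr, e2lAl, e2lSl, e2lSubl, e2lNl, e2lAr, e2lSr, e2lSubr, e2lNr, altAl, altSl, altSubl, altNl, altAr, altSr, altSubr, altNr, e3A1, e3S1, e3Sub1, e3N1, e3A2, e3S2, e3Sub2, e3N2, e3A3, e3S3, e3Sub3, e3N3]; module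
  · -- lin_m2_right
    intro w
    refine ⟨fun a b => ?_, fun c a => ?_⟩ <;> · simp only [e1A, e1S, e1Sub, e1N, e2Al, e2Sl, e2Subl, e2Nl, e2Ar, e2Sr, e2Subr, e2Nr, e2rAl, e2rSl, e2rSubl, e2rNl, e2rAr, e2rSr, e2rSubr, e2rNr, e2lAl, e2lSl, e2lSubl, e2lNl, e2lAr, e2lSr, e2lSubr, e2lNr, altAl, altSl, altSubl, altNl, altAr, altSr, altSubr, altNr, e3A1, e3S1, e3Sub1, e3N1, e3A2, e3S2, e3Sub2, e3N2, e3A3, e3S3, e3Sub3, e3N3]; module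
  · -- lin_m2r_left
    intro w
    refine ⟨fun a b => ?_, fun c a => ?_⟩ <;> · simp only [e1A, e1S, e1Sub, e1N, e2Al, e2Sl, e2Subl, e2Nl, e2Ar, e2Sr, e2Subr, e2Nr, e2rAl, e2rSl, e2rSubl, e2rNl, e2rAr, e2rSr, e2rSubr, e2rNr, e2lAl, e2lSl, e2lSubl, e2lNl, e2lAr, e2lSr, e2lSubr, e2lNr, altAl, altSl, altSubl, altNl, altAr, altSr, altSubr, altNr, e3A1, e3S1, e3Sub1, e3N1, e3A2, e3S2, e3Sub2, e3N2, e3A3, e3S3, e3Sub3, e3N3]; module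
  · -- lin_m2r_right
    intro w
    refine ⟨fun a b => ?_, fun c a => ?_⟩ <;> · simp only [e1A, e1S, e1Sub, e1N, e2Al, e2Sl, e2Subl, e2Nl, e2Ar, e2Sr, e2Subr, e2Nr, e2rAl, e2rSl, e2rSubl, e2rNl, e2rAr, e2rSr, e2rSubr, e2rNr, e2lAl, e2lSl, e2lSubl, e2lNl, e2lAr, e2lSr, e2lSubr, e2lNr, altAl, altSl, altSubl, altNl, altAr, altSr, altSubr, altNr, e3A1, e3S1, e3Sub1, e3N1, e3A2, e3S2, e3Sub2, e3N2, e3A3, e3S3, e3Sub3, e3N3]; module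
  · -- lin_m3_1
    intro u v
    refine ⟨fun a b => ?_, fun c a => ?_⟩ <;> · simp only [m3eq, e1A, e1S, e1Sub, e1N, e2Al, e2Sl, e2Subl, e2Nl, e2Ar, e2Sr, e2Subr, e2Nr, e2rAl, e2rSl, e2rSubl, e2rNl, e2rAr, e2rSr, e2rSubr, e2rNr, e2lAl, e2lSl, e2lSubl, e2lNl, e2lAr, e2lSr, e2lSubr, e2lNr, altAl, altSl, altSubl, altNl, altAr, altSr, altSubr, altNr, e3A1, e3S1, e3Sub1, e3N1, e3A2, e3S2, e3Sub2, e3N2, e3A3, e3S3, e3Sub3, e3N3]; module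
  · -- lin_m3_2
    intro u v
    refine ⟨fun a b => ?_, fun c a => ?_⟩ <;> · simp only [m3eq, e1A, e1S, e1Sub, e1N, e2Al, e2Sl, e2Subl, e2Nl, e2Ar, e2Sr, e2Subr, e2Nr, e2rAl, e2rSl, e2rSubl, e2rNl, e2rAr, e2rSr, e2rSubr, e2rNr, e2lAl, e2lSl, e2lSubl, e2lNl, e2lAr, e2lSr, e2lSubr, e2lNr, altAl, altSl, altSubl, altNl, altAr, altSr, altSubr, altNr, e3A1, e3S1, e3Sub1, e3N1, e3A2, e3S2, e3Sub2, e3N2, e3A3, e3S3, e3Sub3, e3N3]; module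
  · -- lin_m3_3
    intro u v
    refine ⟨fun a b => ?_, fun c a => ?_⟩ <;> · simp only [m3eq, e1A, e1S, e1Sub, e1N, e2Al, e2Sl, e2Subl, e2Nl, e2Ar, e2Sr, e2Subr, e2Nr, e2rAl, e2rSl, e2rSubl, e2rNl, e2rAr, e2rSr, e2rSubr, e2rNr, e2lAl, e2lSl, e2lSubl, e2lNl, e2lAr, e2lSr, e2lSubr, e2lNr, altAl, altSl, altSubl, altNl, altAr, altSr, altSubr, altNr, e3A1, e3S1, e3Sub1, e3N1, e3A2, e3S2, e3Sub2, e3N2, e3A3, e3S3, e3Sub3, e3N3]; module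
  · -- m2_antisym
    intro a b
    beta_reduce
    module
  · -- m3_antisym12
    intro a b c
    simp only [m3eq]
    module
  · -- m3_antisym23
    intro a b c
    simp only [m3eq]
    module
  · -- L1
    intro x yy
    simp only [e1A, e1S, e1Sub, e1N, e2Al, e2Sl, e2Subl, e2Nl, e2Ar, e2Sr, e2Subr, e2Nr, e2rAl, e2rSl, e2rSubl, e2rNl, e2rAr, e2rSr, e2rSubr, e2rNr, e2lAl, e2lSl, e2lSubl, e2lNl, e2lAr, e2lSr, e2lSubr, e2lNr, altAl, altSl, altSubl, altNl, altAr, altSr, altSubr, altNr, e3A1, e3S1, e3Sub1, e3N1, e3A2, e3S2, e3Sub2, e3N2, e3A3, e3S3, e3Sub3, e3N3]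
    linear_combination (norm := module) (1/2 : K) • (hE1a x yy) - (1/2 : K) • (hE1b x yy)
  · -- L2
    intro y₁ y₂
    beta_reduce
    linear_combination (norm := module) (1/2 : K) • (hE1c y₁ y₂) + (1/2 : K) • (hE1c y₂ y₁)
  · -- L3
    intro x₁ x₂ x₃
    simp only [m3eq, e1A, e1S, e1Sub, e1N, e2Al, e2Sl, e2Subl, e2Nl, e2Ar, e2Sr, e2Subr, e2Nr, e2rAl, e2rSl, e2rSubl, e2rNl, e2rAr, e2rSr, e2rSubr, e2rNr, e2lAl, e2lSl, e2lSubl, e2lNl, e2lAr, e2lSr, e2lSubr, e2lNr, altAl, altSl, altSubl, altNl, altAr, altSr, altSubr, altNr, e3A1, e3S1, e3Sub1, e3N1, e3A2, e3S2, e3Sub2, e3N2, e3A3, e3S3, e3Sub3, e3N3]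
    linear_combination (norm := module) (1/6 : K) • (hE3a x₁ x₂ x₃)
      + (-1/12 : K) • (hE2a (e2 x₁ x₂) x₃)
      + (-1/6 : K) • (hE3a x₁ x₃ x₂)
      + (1/12 : K) • (hE2a (e2 x₁ x₃) x₂)
      + (-1/6 : K) • (hE3a x₂ x₁ x₃)
      + (1/12 : K) • (hE2a (e2 x₂ x₁) x₃)
      + (1/6 : K) • (hE3a x₂ x₃ x₁)
      + (-1/12 : K) • (hE2a (e2 x₂ x₃) x₁)
      + (1/6 : K) • (hE3a x₃ x₁ x₂)
      + (-1/12 : K) • (hE2a (e2 x₃ x₁) x₂)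
      + (-1/6 : K) • (hE3a x₃ x₂ x₁)
      + (1/12 : K) • (hE2a (e2 x₃ x₂) x₁)
  · -- L4
    intro x₁ x₂ y
    simp only [m3eq, e1A, e1S, e1Sub, e1N, e2Al, e2Sl, e2Subl, e2Nl, e2Ar, e2Sr, e2Subr, e2Nr, e2rAl, e2rSl, e2rSubl, e2rNl, e2rAr, e2rSr, e2rSubr, e2rNr, e2lAl, e2lSl, e2lSubl, e2lNl, e2lAr, e2lSr, e2lSubr, e2lNr, altAl, altSl, altSubl, altNl, altAr, altSr, altSubr, altNr, e3A1, e3S1, e3Sub1, e3N1, e3A2, e3S2, e3Sub2, e3N2, e3A3, e3S3, e3Sub3, e3N3]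
    linear_combination (norm := module) (1/6 : K) • (hE3b x₁ x₂ y)
      + (-1/6 : K) • (hE3c x₁ y x₂)
      + (1/6 : K) • (hE3d y x₁ x₂)
      + (-1/12 : K) • (hE2b x₁ (e2r x₂ y))
      + (1/12 : K) • (hE2b x₁ (e2l y x₂))
      + (-1/12 : K) • (hE2b (e2 x₁ x₂) y)
      + (1/12 : K) • (cE1aL x₁ y x₂)
      + (-1/12 : K) • (cE1bL y x₁ x₂)
      + (1/12 : K) • (hE4 (e1 (e2r x₂ y)) x₁)
      + (-1/12 : K) • (hE4 (e1 (e2l y x₂)) x₁)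
      + (-1/6 : K) • (hE3b x₂ x₁ y)
      + (1/6 : K) • (hE3c x₂ y x₁)
      + (-1/6 : K) • (hE3d y x₂ x₁)
      + (1/12 : K) • (hE2b x₂ (e2r x₁ y))
      + (-1/12 : K) • (hE2b x₂ (e2l y x₁))
      + (1/12 : K) • (hE2b (e2 x₂ x₁) y)
      + (-1/12 : K) • (cE1aL x₂ y x₁)
      + (1/12 : K) • (cE1bL y x₂ x₁)
      + (-1/12 : K) • (hE4 (e1 (e2r x₁ y)) x₂)
      + (1/12 : K) • (hE4 (e1 (e2l y x₁)) x₂)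
  · -- L5
    intro x₁ x₂ x₃ x₄
    simp only [m3eq, e1A, e1S, e1Sub, e1N, e2Al, e2Sl, e2Subl, e2Nl, e2Ar, e2Sr, e2Subr, e2Nr, e2rAl, e2rSl, e2rSubl, e2rNl, e2rAr, e2rSr, e2rSubr, e2rNr, e2lAl, e2lSl, e2lSubl, e2lNl, e2lAr, e2lSr, e2lSubr, e2lNr, altAl, altSl, altSubl, altNl, altAr, altSr, altSubr, altNr, e3A1, e3S1, e3Sub1, e3N1, e3A2, e3S2, e3Sub2, e3N2, e3A3, e3S3, e3Sub3, e3N3]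
    linear_combination (norm := module) (-1/24 : K) • (hE7 x₁ x₂ x₃ x₄)
      + (1/24 : K) • (hE5 (e2 x₁ x₂) x₃ x₄)
      + (-1/24 : K) • (hE4 (e2 x₃ (e2 x₁ x₂)) x₄)
      + (-1/24 : K) • (hE4 (e2 x₃ x₄) (e2 x₁ x₂))
      + (-1/24 : K) • (cE3aL x₁ x₂ x₃ x₄)
      + (-1/24 : K) • (hE2b x₄ (e3 x₁ x₂ x₃))
      + (1/24 : K) • (hE4 (e1 (e3 x₁ x₂ x₃)) x₄)
      + (-1/12 : K) • (hE5 (e2 x₁ x₂) x₄ x₃)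
      + (1/12 : K) • (hE4 (e2 (e2 x₁ x₂) x₄) x₃)
      + (1/24 : K) • (cE2aR x₃ (e2 x₁ x₂) x₄)
      + (1/24 : K) • (hE6 x₄ (e2 x₁ x₂) x₃)
      + (1/8 : K) • (cE3aL x₁ x₂ x₄ x₃)
      + (-1/24 : K) • (cE3aR x₃ x₁ x₂ x₄)
      + (1/12 : K) • (hE2b x₃ (e3 x₁ x₂ x₄))
      + (-1/24 : K) • (hE2b x₃ (alt (e2 x₁ x₂) x₄))
      + (-1/8 : K) • (hE4 (e1 (e3 x₁ x₂ x₄)) x₃)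
      + (1/24 : K) • (hE7 x₁ x₃ x₂ x₄)
      + (-1/24 : K) • (hE5 (e2 x₁ x₃) x₂ x₄)
      + (-1/24 : K) • (hE4 (e2 (e2 x₁ x₃) x₂) x₄)
      + (1/24 : K) • (hE4 (e2 x₂ x₄) (e2 x₁ x₃))
      + (1/24 : K) • (cE3aR x₄ x₁ x₃ x₂)
      + (1/24 : K) • (hE2b x₄ (e3 x₁ x₃ x₂))
      + (1/12 : K) • (hE5 (e2 x₁ x₃) x₄ x₂)
      + (-1/12 : K) • (hE4 (e2 (e2 x₁ x₃) x₄) x₂)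
      + (-1/24 : K) • (cE2aR x₂ (e2 x₁ x₃) x₄)
      + (-1/24 : K) • (hE6 x₄ (e2 x₁ x₃) x₂)
      + (-1/8 : K) • (cE3aL x₁ x₃ x₄ x₂)
      + (1/24 : K) • (cE3aR x₂ x₁ x₃ x₄)
      + (-1/12 : K) • (hE2b x₂ (e3 x₁ x₃ x₄))
      + (1/24 : K) • (hE2b x₂ (alt (e2 x₁ x₃) x₄))
      + (1/8 : K) • (hE4 (e1 (e3 x₁ x₃ x₄)) x₂)
      + (-1/8 : K) • (hE7 x₁ x₄ x₂ x₃)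
      + (-1/24 : K) • (hE5 (e2 x₁ x₄) x₂ x₃)
      + (-1/24 : K) • (hE4 (e2 (e2 x₁ x₄) x₂) x₃)
      + (1/12 : K) • (cE2aR x₃ (e2 x₁ x₄) x₂)
      + (-1/12 : K) • (hE6 x₂ (e2 x₁ x₄) x₃)
      + (1/24 : K) • (hE4 (e2 x₂ x₃) (e2 x₁ x₄))
      + (-1/12 : K) • (cE3aL x₁ x₄ x₂ x₃)
      + (1/8 : K) • (cE3aR x₃ x₁ x₄ x₂)
      + (1/24 : K) • (hE2b x₃ (e3 x₁ x₄ x₂))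
      + (-1/12 : K) • (hE2b x₃ (alt (e2 x₁ x₄) x₂))
      + (1/12 : K) • (hE4 (e1 (e3 x₁ x₄ x₂)) x₃)
      + (1/12 : K) • (hE7 x₁ x₄ x₃ x₂)
      + (1/24 : K) • (hE4 (e2 (e2 x₁ x₄) x₃) x₂)
      + (-1/24 : K) • (cE2aR x₂ (e2 x₁ x₄) x₃)
      + (1/8 : K) • (hE6 x₃ (e2 x₁ x₄) x₂)
      + (1/24 : K) • (hE4 (e2 x₃ (e2 x₁ x₄)) x₂)
      + (-1/12 : K) • (hE4 (e2 x₃ x₂) (e2 x₁ x₄))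
      + (1/12 : K) • (cE3aL x₁ x₄ x₃ x₂)
      + (-1/12 : K) • (cE3aR x₂ x₁ x₄ x₃)
      + (1/24 : K) • (hE2b x₂ (alt (e2 x₁ x₄) x₃))
      + (-1/12 : K) • (hE4 (e1 (e3 x₁ x₄ x₃)) x₂)
      + (1/12 : K) • (hE7 x₂ x₁ x₃ x₄)
      + (-1/24 : K) • (hE4 (e2 (e2 x₂ x₁) x₃) x₄)
      + (-1/24 : K) • (cE2aR x₄ (e2 x₂ x₁) x₃)
      + (-1/24 : K) • (hE6 x₃ (e2 x₂ x₁) x₄)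
      + (1/12 : K) • (hE4 (e2 x₃ x₄) (e2 x₂ x₁))
      + (1/24 : K) • (hE2b x₄ (alt (e2 x₂ x₁) x₃))
      + (1/24 : K) • (hE7 x₂ x₁ x₄ x₃)
      + (1/8 : K) • (hE5 (e2 x₂ x₁) x₄ x₃)
      + (1/24 : K) • (hE4 (e2 (e2 x₂ x₁) x₄) x₃)
      + (-1/12 : K) • (cE2aR x₃ (e2 x₂ x₁) x₄)
      + (-1/12 : K) • (hE6 x₄ (e2 x₂ x₁) x₃)
      + (-1/24 : K) • (hE4 (e2 x₄ (e2 x₂ x₁)) x₃)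
      + (1/24 : K) • (hE4 (e2 x₄ x₃) (e2 x₂ x₁))
      + (-1/8 : K) • (cE3aR x₃ x₂ x₁ x₄)
      + (-1/8 : K) • (hE2b x₃ (e3 x₂ x₁ x₄))
      + (1/12 : K) • (hE2b x₃ (alt (e2 x₂ x₁) x₄))
      + (-1/24 : K) • (hE7 x₂ x₃ x₁ x₄)
      + (1/24 : K) • (hE5 (e2 x₂ x₃) x₁ x₄)
      + (1/24 : K) • (hE4 (e2 (e2 x₂ x₃) x₁) x₄)
      + (-1/24 : K) • (cE3aR x₄ x₂ x₃ x₁)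
      + (-1/24 : K) • (hE2b x₄ (e3 x₂ x₃ x₁))
      + (-1/12 : K) • (hE5 (e2 x₂ x₃) x₄ x₁)
      + (1/8 : K) • (hE4 (e2 (e2 x₂ x₃) x₄) x₁)
      + (1/24 : K) • (cE2aR x₁ (e2 x₂ x₃) x₄)
      + (1/24 : K) • (hE6 x₄ (e2 x₂ x₃) x₁)
      + (1/24 : K) • (hE4 (e2 x₄ (e2 x₂ x₃)) x₁)
      + (1/6 : K) • (cE3aL x₂ x₃ x₄ x₁)
      + (-1/12 : K) • (cE3aR x₁ x₂ x₃ x₄)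
      + (1/12 : K) • (hE2b x₁ (e3 x₂ x₃ x₄))
      + (-1/24 : K) • (hE2b x₁ (alt (e2 x₂ x₃) x₄))
      + (-1/6 : K) • (hE4 (e1 (e3 x₂ x₃ x₄)) x₁)
      + (1/8 : K) • (hE7 x₂ x₄ x₁ x₃)
      + (1/24 : K) • (hE5 (e2 x₂ x₄) x₁ x₃)
      + (1/24 : K) • (hE4 (e2 (e2 x₂ x₄) x₁) x₃)
      + (-1/12 : K) • (cE2aR x₃ (e2 x₂ x₄) x₁)
      + (1/12 : K) • (hE6 x₁ (e2 x₂ x₄) x₃)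
      + (1/12 : K) • (cE3aL x₂ x₄ x₁ x₃)
      + (-1/8 : K) • (cE3aR x₃ x₂ x₄ x₁)
      + (-1/24 : K) • (hE2b x₃ (e3 x₂ x₄ x₁))
      + (1/12 : K) • (hE2b x₃ (alt (e2 x₂ x₄) x₁))
      + (-1/12 : K) • (hE4 (e1 (e3 x₂ x₄ x₁)) x₃)
      + (-1/12 : K) • (hE7 x₂ x₄ x₃ x₁)
      + (1/24 : K) • (cE2aR x₁ (e2 x₂ x₄) x₃)
      + (-1/8 : K) • (hE6 x₃ (e2 x₂ x₄) x₁)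
      + (1/12 : K) • (hE4 (e2 x₃ x₁) (e2 x₂ x₄))
      + (-1/24 : K) • (cE3aL x₂ x₄ x₃ x₁)
      + (1/24 : K) • (cE3aR x₁ x₂ x₄ x₃)
      + (-1/24 : K) • (hE2b x₁ (alt (e2 x₂ x₄) x₃))
      + (1/24 : K) • (hE4 (e1 (e3 x₂ x₄ x₃)) x₁)
      + (-1/12 : K) • (hE7 x₃ x₁ x₂ x₄)
      + (1/24 : K) • (hE4 (e2 (e2 x₃ x₁) x₂) x₄)
      + (1/24 : K) • (cE2aR x₄ (e2 x₃ x₁) x₂)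
      + (1/24 : K) • (hE6 x₂ (e2 x₃ x₁) x₄)
      + (-1/24 : K) • (hE2b x₄ (alt (e2 x₃ x₁) x₂))
      + (-1/24 : K) • (hE7 x₃ x₁ x₄ x₂)
      + (-1/8 : K) • (hE5 (e2 x₃ x₁) x₄ x₂)
      + (-1/24 : K) • (hE4 (e2 (e2 x₃ x₁) x₄) x₂)
      + (1/12 : K) • (cE2aR x₂ (e2 x₃ x₁) x₄)
      + (1/12 : K) • (hE6 x₄ (e2 x₃ x₁) x₂)
      + (1/12 : K) • (hE4 (e2 x₄ (e2 x₃ x₁)) x₂)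
      + (-1/24 : K) • (hE4 (e2 x₄ x₂) (e2 x₃ x₁))
      + (1/8 : K) • (cE3aR x₂ x₃ x₁ x₄)
      + (1/8 : K) • (hE2b x₂ (e3 x₃ x₁ x₄))
      + (-1/12 : K) • (hE2b x₂ (alt (e2 x₃ x₁) x₄))
      + (1/12 : K) • (hE7 x₃ x₂ x₁ x₄)
      + (-1/24 : K) • (hE4 (e2 (e2 x₃ x₂) x₁) x₄)
      + (-1/24 : K) • (cE2aR x₄ (e2 x₃ x₂) x₁)
      + (-1/24 : K) • (hE6 x₁ (e2 x₃ x₂) x₄)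
      + (1/24 : K) • (hE2b x₄ (alt (e2 x₃ x₂) x₁))
      + (1/24 : K) • (hE7 x₃ x₂ x₄ x₁)
      + (1/8 : K) • (hE5 (e2 x₃ x₂) x₄ x₁)
      + (1/24 : K) • (hE4 (e2 (e2 x₃ x₂) x₄) x₁)
      + (-1/12 : K) • (cE2aR x₁ (e2 x₃ x₂) x₄)
      + (-1/12 : K) • (hE6 x₄ (e2 x₃ x₂) x₁)
      + (-1/12 : K) • (hE4 (e2 x₄ (e2 x₃ x₂)) x₁)
      + (1/24 : K) • (hE4 (e2 x₄ x₁) (e2 x₃ x₂))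
      + (-1/8 : K) • (cE3aR x₁ x₃ x₂ x₄)
      + (-1/8 : K) • (hE2b x₁ (e3 x₃ x₂ x₄))
      + (1/12 : K) • (hE2b x₁ (alt (e2 x₃ x₂) x₄))
      + (-1/8 : K) • (hE7 x₃ x₄ x₁ x₂)
      + (-1/24 : K) • (hE5 (e2 x₃ x₄) x₁ x₂)
      + (1/12 : K) • (cE2aR x₂ (e2 x₃ x₄) x₁)
      + (-1/12 : K) • (hE6 x₁ (e2 x₃ x₄) x₂)
      + (-1/24 : K) • (cE3aL x₃ x₄ x₁ x₂)
      + (1/12 : K) • (cE3aR x₂ x₃ x₄ x₁)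
      + (1/24 : K) • (hE2b x₂ (e3 x₃ x₄ x₁))
      + (-1/12 : K) • (hE2b x₂ (alt (e2 x₃ x₄) x₁))
      + (1/24 : K) • (hE4 (e1 (e3 x₃ x₄ x₁)) x₂)
      + (1/12 : K) • (hE7 x₃ x₄ x₂ x₁)
      + (-1/24 : K) • (cE2aR x₁ (e2 x₃ x₄) x₂)
      + (1/8 : K) • (hE6 x₂ (e2 x₃ x₄) x₁)
      + (1/24 : K) • (cE3aL x₃ x₄ x₂ x₁)
      + (-1/24 : K) • (cE3aR x₁ x₃ x₄ x₂)
      + (1/24 : K) • (hE2b x₁ (alt (e2 x₃ x₄) x₂))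
      + (-1/24 : K) • (hE4 (e1 (e3 x₃ x₄ x₂)) x₁)
      + (-1/12 : K) • (hE5 (e2 x₄ x₁) x₂ x₃)
      + (-1/24 : K) • (hE4 (e2 (e2 x₄ x₁) x₂) x₃)
      + (1/24 : K) • (cE2aR x₃ (e2 x₄ x₁) x₂)
      + (1/24 : K) • (hE6 x₂ (e2 x₄ x₁) x₃)
      + (1/12 : K) • (cE3aR x₃ x₄ x₁ x₂)
      + (1/12 : K) • (hE2b x₃ (e3 x₄ x₁ x₂))
      + (-1/24 : K) • (hE2b x₃ (alt (e2 x₄ x₁) x₂))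
      + (-1/24 : K) • (hE7 x₄ x₁ x₃ x₂)
      + (1/24 : K) • (hE5 (e2 x₄ x₁) x₃ x₂)
      + (1/24 : K) • (hE4 (e2 (e2 x₄ x₁) x₃) x₂)
      + (-1/24 : K) • (cE3aR x₂ x₄ x₁ x₃)
      + (-1/24 : K) • (hE2b x₂ (e3 x₄ x₁ x₃))
      + (1/12 : K) • (hE5 (e2 x₄ x₂) x₁ x₃)
      + (1/24 : K) • (hE4 (e2 (e2 x₄ x₂) x₁) x₃)
      + (-1/24 : K) • (cE2aR x₃ (e2 x₄ x₂) x₁)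
      + (-1/24 : K) • (hE6 x₁ (e2 x₄ x₂) x₃)
      + (-1/12 : K) • (cE3aR x₃ x₄ x₂ x₁)
      + (-1/12 : K) • (hE2b x₃ (e3 x₄ x₂ x₁))
      + (1/24 : K) • (hE2b x₃ (alt (e2 x₄ x₂) x₁))
      + (1/24 : K) • (hE7 x₄ x₂ x₃ x₁)
      + (-1/24 : K) • (hE5 (e2 x₄ x₂) x₃ x₁)
      + (-1/24 : K) • (hE4 (e2 (e2 x₄ x₂) x₃) x₁)
      + (1/24 : K) • (cE3aR x₁ x₄ x₂ x₃)
      + (1/24 : K) • (hE2b x₁ (e3 x₄ x₂ x₃))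
      + (-1/12 : K) • (hE5 (e2 x₄ x₃) x₁ x₂)
      + (-1/24 : K) • (hE4 (e2 (e2 x₄ x₃) x₁) x₂)
      + (1/24 : K) • (cE2aR x₂ (e2 x₄ x₃) x₁)
      + (1/24 : K) • (hE6 x₁ (e2 x₄ x₃) x₂)
      + (1/12 : K) • (cE3aR x₂ x₄ x₃ x₁)
      + (1/12 : K) • (hE2b x₂ (e3 x₄ x₃ x₁))
      + (-1/24 : K) • (hE2b x₂ (alt (e2 x₄ x₃) x₁))
      + (-1/24 : K) • (hE7 x₄ x₃ x₂ x₁)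
      + (1/24 : K) • (hE5 (e2 x₄ x₃) x₂ x₁)
      + (1/24 : K) • (hE4 (e2 (e2 x₄ x₃) x₂) x₁)
      + (-1/24 : K) • (cE3aR x₁ x₄ x₃ x₂)
      + (-1/24 : K) • (hE2b x₁ (e3 x₄ x₃ x₂))
end

section
/- Let 𝔤 be a (left) Leibniz algebra over a field of characteristic zero, let 𝔤^ann denote the linear span of all brackets [x,y], and let ι : 𝔤^ann ↪ 𝔤 be the inclusion. Define μ₂(a,b) := ½([a,b] − [b,a]) for a,b ∈ 𝔤 (which restricts to a map 𝔤 × 𝔤^ann → 𝔤^ann), and μ₃(x₁,x₂,x₃) := (1/12) Σ_{σ∈S₃} sgn(σ)·([[x_{σ(1)},x_{σ(2)}],x_{σ(3)}] + [x_{σ(3)},[x_{σ(1)},x_{σ(2)}]]) ∈ 𝔤^ann. Then (𝔤^ann, 𝔤, ι, μ₂, μ₃) is a 2-term L∞-algebra. -/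
/-- The ternary product
`μ₃(x₁,x₂,x₃) = (1/12) Σ_{σ∈S₃} sgn(σ)·([[x_{σ(1)},x_{σ(2)}],x_{σ(3)}] +
[x_{σ(3)},[x_{σ(1)},x_{σ(2)}]])`. -/
noncomputable def leibMu3 (K : Type*) [Field K] {V : Type*} [AddCommGroup V]
    [Module K V] (br : V →ₗ[K] V →ₗ[K] V) (x₁ x₂ x₃ : V) : V :=
  (12 : K)⁻¹ • ∑ σ : Equiv.Perm (Fin 3),
    ((Equiv.Perm.sign σ : ℤ)) •
      (br (br (![x₁, x₂, x₃] (σ 0)) (![x₁, x₂, x₃] (σ 1))) (![x₁, x₂, x₃] (σ 2))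
        + br (![x₁, x₂, x₃] (σ 2)) (br (![x₁, x₂, x₃] (σ 0)) (![x₁, x₂, x₃] (σ 1))))

lemma leibMu3_mem (K : Type*) [Field K] {V : Type*} [AddCommGroup V] [Module K V]
    (br : V →ₗ[K] V →ₗ[K] V) (x₁ x₂ x₃ : V) : leibMu3 K br x₁ x₂ x₃ ∈ leibAnn K br := by
  apply Submodule.smul_mem
  apply Submodule.sum_mem
  intro σ _
  exact zsmul_mem
    (add_mem (br_mem_leibAnn_right K br _ _) (br_mem_leibAnn_right K br _ _)) _


lemma leibMu3_eq (K : Type*) [Field K] {V : Type*} [AddCommGroup V]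
    [Module K V] (br : V →ₗ[K] V →ₗ[K] V) (x y z : V) :
    leibMu3 K br x y z = (12 : K)⁻¹ •
      ( (br (br x y) z + br z (br x y))
        - (br (br y x) z + br z (br y x))
        - (br (br z y) x + br x (br z y))
        - (br (br x z) y + br y (br x z))
        + (br (br y z) x + br x (br y z))
        + (br (br z x) y + br y (br z x)) ) := by
  rw [leibMu3]
  congr 1
  rw [show (Finset.univ : Finset (Equiv.Perm (Fin 3))) =
      {1, Equiv.swap 0 1, Equiv.swap 0 2, Equiv.swap 1 2, finRotate 3, (finRotate 3)⁻¹} from by decide]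
  rw [Finset.sum_insert (by decide), Finset.sum_insert (by decide),
    Finset.sum_insert (by decide), Finset.sum_insert (by decide),
    Finset.sum_insert (by decide), Finset.sum_singleton]
  norm_num [show ∀ i : Fin 3, (Equiv.swap 0 1) i = ![1,0,2] i from by decide,
    show ∀ i : Fin 3, (Equiv.swap 0 2) i = ![2,1,0] i from by decide,
    show ∀ i : Fin 3, (Equiv.swap 1 2) i = ![0,2,1] i from by decide,
    show ∀ i : Fin 3, (finRotate 3) i = ![1,2,0] i from by decide,
    show ∀ i : Fin 3, (finRotate 3)⁻¹ i = ![2,0,1] i from by decide,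
    show Equiv.Perm.sign (Equiv.swap (0:Fin 3) 1) = -1 from by decide,
    show Equiv.Perm.sign (Equiv.swap (0:Fin 3) 2) = -1 from by decide,
    show Equiv.Perm.sign (Equiv.swap (1:Fin 3) 2) = -1 from by decide,
    show Equiv.Perm.sign (finRotate 3) = 1 from by decide,
    show Equiv.Perm.sign (finRotate 3)⁻¹ = 1 from by decide]
  abel

set_option maxHeartbeats 4000000 in
/-- Any (left) Leibniz algebra `𝔤` induces a 2-term L∞-algebra on
`𝔤^ann ↪ 𝔤` with `μ₂(a,b) = ½([a,b] − [b,a])` and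
`μ₃(x₁,x₂,x₃) = (1/12) Σ_{σ∈S₃} sgn(σ)·([[x_{σ(1)},x_{σ(2)}],x_{σ(3)}]
  + [x_{σ(3)},[x_{σ(1)},x_{σ(2)}]])`. -/
theorem leibniz_to_2term_LInfty
    (K : Type*) [Field K] [CharZero K] {V : Type*} [AddCommGroup V] [Module K V]
    (br : V →ₗ[K] V →ₗ[K] V)
    (hbr : ∀ x y z : V, br x (br y z) = br (br x y) z + br y (br x z)) :
    Is2TermLInfty K (Lm1 := ↥(leibAnn K br)) (L0 := V)
      (fun y => (y : V))
      (fun a b => (2 : K)⁻¹ • (br a b - br b a))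
      (fun x y => ⟨(2 : K)⁻¹ • (br x (y : V) - br (y : V) x),
        Submodule.smul_mem _ _ (sub_mem (br_mem_leibAnn_left K br hbr x y.2)
          (br_mem_leibAnn_right K br _ _))⟩)
      (fun x₁ x₂ x₃ => ⟨leibMu3 K br x₁ x₂ x₃, leibMu3_mem K br x₁ x₂ x₃⟩) := by
  
  have hbr' : ∀ x y z : V, br (br x y) z = br x (br y z) - br y (br x z) := by
    intro x y z
    rw [eq_sub_iff_add_eq]
    exact (hbr x y z).symm
  constructor
  · exact ⟨fun _ _ => rfl, fun _ _ => rfl⟩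
  · intro y
    constructor <;> intros <;>
      simp only [map_add, map_smul, LinearMap.add_apply, LinearMap.smul_apply] <;> module
  · intro x
    constructor <;> intros <;>
      simp only [map_add, map_smul, LinearMap.add_apply, LinearMap.smul_apply] <;> module
  · intro y
    constructor <;> intros <;> apply Subtype.ext <;>
      simp only [map_add, map_smul, LinearMap.add_apply, LinearMap.smul_apply,
        Submodule.coe_add, Submodule.coe_smul, SetLike.mk_smul_mk, AddMemClass.mk_add_mk] <;>
      module
  · intro x
    constructor <;> intros <;> apply Subtype.ext <;>
      simp only [map_add, map_smul, LinearMap.add_apply, LinearMap.smul_apply,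
        Submodule.coe_add, Submodule.coe_smul, SetLike.mk_smul_mk, AddMemClass.mk_add_mk] <;>
      module
  · intro y z
    constructor <;> intros <;> apply Subtype.ext <;>
      simp only [leibMu3_eq, map_add, map_smul, LinearMap.add_apply, LinearMap.smul_apply,
        Submodule.coe_add, Submodule.coe_smul, SetLike.mk_smul_mk, AddMemClass.mk_add_mk] <;>
      module
  · intro x z
    constructor <;> intros <;> apply Subtype.ext <;>
      simp only [leibMu3_eq, map_add, map_smul, LinearMap.add_apply, LinearMap.smul_apply,
        Submodule.coe_add, Submodule.coe_smul, SetLike.mk_smul_mk, AddMemClass.mk_add_mk] <;>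
      module
  · intro x y
    constructor <;> intros <;> apply Subtype.ext <;>
      simp only [leibMu3_eq, map_add, map_smul, LinearMap.add_apply, LinearMap.smul_apply,
        Submodule.coe_add, Submodule.coe_smul, SetLike.mk_smul_mk, AddMemClass.mk_add_mk] <;>
      module
  · intro x₁ x₂
    module
  · intro x₁ x₂ x₃
    apply Subtype.ext
    simp only [leibMu3_eq, Submodule.coe_neg, NegMemClass.coe_neg]
    module
  · intro x₁ x₂ x₃
    apply Subtype.ext
    simp only [leibMu3_eq, Submodule.coe_neg, NegMemClass.coe_neg]
    module
  · intro x y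
    rfl
  · intro y₁ y₂
    apply Subtype.ext
    simp only [Submodule.coe_add, AddMemClass.mk_add_mk, ZeroMemClass.coe_zero]
    module
  · intro x₁ x₂ x₃
    simp only [leibMu3_eq, map_sub, map_smul, map_add, LinearMap.sub_apply,
      LinearMap.smul_apply, LinearMap.add_apply, hbr']
    match_scalars <;> field_simp <;> ring
  · intro x₁ x₂ y
    apply Subtype.ext
    simp only [leibMu3_eq, Submodule.coe_sub, Submodule.coe_neg, AddMemClass.mk_add_mk,
      map_sub, map_smul, map_add, LinearMap.sub_apply, LinearMap.smul_apply,
      LinearMap.add_apply, hbr']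
    match_scalars <;> field_simp <;> ring
  · intro x₁ x₂ x₃ x₄
    apply Subtype.ext
    simp only [leibMu3_eq, Submodule.coe_sub, Submodule.coe_add, Submodule.coe_neg,
      AddMemClass.mk_add_mk, map_sub, map_smul, map_add, LinearMap.sub_apply,
      LinearMap.smul_apply, LinearMap.add_apply, hbr']
    match_scalars <;> field_simp <;> ring
end

section
/- Let (𝔤, (−,−)) be a quadratic Lie algebra over a field k of characteristic zero and let θ ∈ k. On E₋₁ := k, E₀ := 𝔤 define ε₁ := 0, ε₂(x₁,x₂) := [x₁,x₂] for x₁,x₂ ∈ 𝔤, ε₂ := 0 whenever one argument lies in E₋₁, alt(x₁,x₂) := 2θ(x₁,x₂) ∈ k, and ε₃(x₁,x₂,x₃) := (1−θ)(x₁,[x₂,x₃]) ∈ k. Then for every θ ∈ k this data is a 2-term E₂L∞-algebra (the weak string Lie 2-algebra model string^{wk,θ}_sk(𝔤)); in particular ε₃ = 0 when θ = 1 and alt = 0 when θ = 0. -/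
/-- For a quadratic Lie algebra `(𝔤, (−,−))` and `θ ∈ k`, the data
`E₋₁ = k`, `E₀ = 𝔤`, `ε₁ = 0`, `ε₂ = [−,−]` (and `ε₂ = 0` in mixed degrees),
`alt(x₁,x₂) = 2θ(x₁,x₂)`, `ε₃(x₁,x₂,x₃) = (1−θ)(x₁,[x₂,x₃])` is a 2-term
E₂L∞-algebra (the weak string Lie 2-algebra model); in particular `ε₃ = 0` when
`θ = 1`, and `alt = 0` when `θ = 0`. -/
theorem weak_string_model_is_2term_E2LInfty
    (K : Type*) [Field K] [CharZero K]
    (g : Type*) [LieRing g] [LieAlgebra K g]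
    (B : g →ₗ[K] g →ₗ[K] K)
    (hsymm : ∀ x y : g, B x y = B y x)
    (hinv : ∀ x y z : g, B ⁅x, y⁆ z = B x ⁅y, z⁆)
    (θ : K) :
    Is2TermE2LInfty K (Em1 := K) (E0 := g)
      (fun _ => (0 : g))
      (fun x₁ x₂ => ⁅x₁, x₂⁆)
      (fun _ _ => (0 : K))
      (fun _ _ => (0 : K))
      (fun x₁ x₂ x₃ => (1 - θ) * B x₁ ⁅x₂, x₃⁆)
      (fun x₁ x₂ => 2 * θ * B x₁ x₂)
    ∧ (θ = 1 → ∀ x₁ x₂ x₃ : g, (1 - θ) * B x₁ ⁅x₂, x₃⁆ = 0)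
    ∧ (θ = 0 → ∀ x₁ x₂ : g, 2 * θ * B x₁ x₂ = 0) := by
  have hskew : ∀ x y z : g, B x ⁅y, z⁆ = - B y ⁅x, z⁆ := by
    intro x y z
    rw [← hinv, ← hinv]
    have : (⁅x, y⁆ : g) = -⁅y, x⁆ := by rw [← lie_skew]
    rw [this, map_neg, LinearMap.neg_apply]
  refine ⟨{ lin_e1 := ⟨by simp, by simp⟩
            lin_e2_left := fun y => ⟨fun a b => add_lie a b y, fun c a => smul_lie c a y⟩
            lin_e2_right := fun x => ⟨fun a b => lie_add x a b, fun c a => lie_smul c x a⟩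
            lin_e2r_left := fun _ => ⟨by simp, by simp⟩
            lin_e2r_right := fun _ => ⟨by simp, by simp⟩
            lin_e2l_left := fun _ => ⟨by simp, by simp⟩
            lin_e2l_right := fun _ => ⟨by simp, by simp⟩
            lin_e3_1 := fun y z => ⟨by intros; simp [mul_add], by intros; simp; ring⟩
            lin_e3_2 := fun x z => ⟨by intros; simp [add_lie, mul_add],
                                    by intros; simp only [smul_lie, map_smul, smul_eq_mul]; ring⟩
            lin_e3_3 := fun x y => ⟨by intros; simp [lie_add, mul_add],
                                    by intros; simp only [lie_smul, map_smul, smul_eq_mul]; ring⟩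
            lin_alt_left := fun y => ⟨by intros; simp [mul_add], by intros; simp; ring⟩
            lin_alt_right := fun x => ⟨by intros; simp [mul_add], by intros; simp; ring⟩
            E1a := by intros; simp
            E1b := by intros; simp
            E1c := by intros; simp
            E2a := by intro x₁ x₂; show ⁅x₁, x₂⁆ + ⁅x₂, x₁⁆ = 0; rw [← lie_skew x₂ x₁, add_neg_cancel]
            E2b := by intros; simp
            E3a := by intro x₁ x₂ x₃; simp only [neg_zero]; rw [leibniz_lie x₁ x₂ x₃]; abel
            E3b := by intro x₁ x₂ y; simp
            E3c := by intro x₁ y x₃; simp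
            E3d := by intro y x₂ x₃; simp
            E4 := by intro x₁ x₂; rw [hsymm]
            E5 := by intro x₁ x₂ x₃; rw [hskew x₁ x₂ x₃]; ring
            E6 := by
              intro x₁ x₂ x₃
              have h1 : B x₁ ⁅x₂, x₃⁆ + B x₁ ⁅x₃, x₂⁆ = 0 := by
                rw [← lie_skew x₂ x₃, map_neg]; ring
              have h2 : B ⁅x₁, x₂⁆ x₃ = B x₁ ⁅x₂, x₃⁆ := hinv x₁ x₂ x₃
              have h3 : B x₂ ⁅x₁, x₃⁆ = - B x₁ ⁅x₂, x₃⁆ := hskew x₂ x₁ x₃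
              simp only [h2, h3]
              linear_combination (1 - θ) * h1
            E7 := by
              intro x₁ x₂ x₃ x₄
              have hL : (⁅x₂, ⁅x₃, x₄⁆⁆ : g) = ⁅⁅x₂, x₃⁆, x₄⁆ + ⁅x₃, ⁅x₂, x₄⁆⁆ :=
                leibniz_lie x₂ x₃ x₄
              have hL' : (⁅x₁, ⁅x₃, x₄⁆⁆ : g) = ⁅⁅x₁, x₃⁆, x₄⁆ + ⁅x₃, ⁅x₁, x₄⁆⁆ :=
                leibniz_lie x₁ x₃ x₄
              have h2 : B ⁅x₁, x₂⁆ ⁅x₃, x₄⁆ = B x₁ ⁅x₂, ⁅x₃, x₄⁆⁆ := hinv _ _ _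
              have h3 : B x₂ ⁅x₁, ⁅x₃, x₄⁆⁆ = - B x₁ ⁅x₂, ⁅x₃, x₄⁆⁆ := hskew _ _ _
              have hA : B x₁ ⁅x₂, ⁅x₃, x₄⁆⁆ = B x₁ ⁅⁅x₂, x₃⁆, x₄⁆ + B x₁ ⁅x₃, ⁅x₂, x₄⁆⁆ := by
                rw [hL, map_add]
              have hB : B x₂ ⁅x₁, ⁅x₃, x₄⁆⁆ = B x₂ ⁅⁅x₁, x₃⁆, x₄⁆ + B x₂ ⁅x₃, ⁅x₁, x₄⁆⁆ := by
                rw [hL', map_add]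
              simp only [zero_add, add_zero]
              linear_combination (1 - θ) * (hB - hA - h2 - h3)
            },
          ?_, ?_⟩
  · intro h x₁ x₂ x₃; rw [h]; ring
  · intro h x₁ x₂; rw [h]; ring
end

section
/- Let (𝔤, (−,−)) be a quadratic Lie algebra over a field k of characteristic zero. Then L₋₁ := k, L₀ := 𝔤, μ₁ := 0, μ₂(x₁,x₂) := [x₁,x₂] for x₁,x₂ ∈ 𝔤, μ₂(x,r) := 0 for x ∈ 𝔤 and r ∈ k, and μ₃(x₁,x₂,x₃) := (x₁,[x₂,x₃]) define a 2-term L∞-algebra (the skeletal model string_sk(𝔤) of the string Lie 2-algebra); in particular μ₃ is totally antisymmetric and satisfies the coherence law (L5). -/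
/-- For a quadratic Lie algebra `(𝔤, (−,−))`, the data `L₋₁ = k`, `L₀ = 𝔤`,
`μ₁ = 0`, `μ₂ = [−,−]` (and `μ₂ = 0` in mixed degrees),
`μ₃(x₁,x₂,x₃) = (x₁,[x₂,x₃])` defines a 2-term L∞-algebra (the skeletal string
Lie 2-algebra model); in particular `μ₃` is totally antisymmetric and satisfies
the coherence law (L5) (these are fields of the structure). -/
theorem skeletal_string_is_2term_LInfty
    (K : Type*) [Field K] [CharZero K]
    (g : Type*) [LieRing g] [LieAlgebra K g]
    (B : g →ₗ[K] g →ₗ[K] K)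
    (hsymm : ∀ x y : g, B x y = B y x)
    (hinv : ∀ x y z : g, B ⁅x, y⁆ z = B x ⁅y, z⁆) :
    Is2TermLInfty K (Lm1 := K) (L0 := g)
      (fun _ => (0 : g))
      (fun x₁ x₂ => ⁅x₁, x₂⁆)
      (fun _ _ => (0 : K))
      (fun x₁ x₂ x₃ => B x₁ ⁅x₂, x₃⁆) := by
  have key : ∀ a b c d : g, B ⁅a, b⁆ ⁅c, d⁆ = B a ⁅b, ⁅c, d⁆⁆ := fun a b c d => hinv a b ⁅c, d⁆
  constructor
  · exact ⟨by simp, by simp⟩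
  · intro y; exact ⟨fun a b => add_lie a b y, fun c a => smul_lie c a y⟩
  · intro x; exact ⟨fun a b => lie_add x a b, fun c a => lie_smul c x a⟩
  · intro y; exact ⟨by simp, by simp⟩
  · intro x; exact ⟨by simp, by simp⟩
  · intro y z; exact ⟨fun a b => by simp, fun c a => by simp⟩
  · intro x z; exact ⟨fun a b => by simp, fun c a => by simp⟩
  · intro x y; exact ⟨fun a b => by simp, fun c a => by simp⟩
  · intro x₁ x₂; exact (lie_skew x₁ x₂).symm
  · intro x₁ x₂ x₃
    calc B x₁ ⁅x₂, x₃⁆ = B ⁅x₂, x₃⁆ x₁ := hsymm _ _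
      _ = B x₂ ⁅x₃, x₁⁆ := hinv _ _ _
      _ = - B x₂ ⁅x₁, x₃⁆ := by rw [← lie_skew x₃ x₁, map_neg]
  · intro x₁ x₂ x₃; rw [← lie_skew x₂ x₃, map_neg]
  · intro x y; simp
  · intro y₁ y₂; simp
  · intro x₁ x₂ x₃; rw [lie_jacobi]; simp
  · intro x₁ x₂ y; simp
  · intro x₁ x₂ x₃ x₄
    have t4 : B ⁅x₂, x₃⁆ ⁅x₁, x₄⁆ = B ⁅x₁, x₄⁆ ⁅x₂, x₃⁆ := hsymm _ _
    have t5 : B ⁅x₂, x₄⁆ ⁅x₁, x₃⁆ = B ⁅x₁, x₃⁆ ⁅x₂, x₄⁆ := hsymm _ _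
    have t6 : B ⁅x₃, x₄⁆ ⁅x₁, x₂⁆ = B ⁅x₁, x₂⁆ ⁅x₃, x₄⁆ := hsymm _ _
    have hz : (B x₁) (⁅x₂, ⁅x₃, x₄⁆⁆ - ⁅x₃, ⁅x₂, x₄⁆⁆ + ⁅x₄, ⁅x₂, x₃⁆⁆) = 0 := by
      have : ⁅x₂, ⁅x₃, x₄⁆⁆ - ⁅x₃, ⁅x₂, x₄⁆⁆ + ⁅x₄, ⁅x₂, x₃⁆⁆ = 0 := by
        rw [← lie_lie, ← lie_skew x₄ ⁅x₂, x₃⁆]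
        abel
      rw [this, map_zero]
    rw [map_add, map_sub] at hz
    rw [t4, t5, t6, key, key, key]
    linear_combination 2 * hz
end

section
/- Let (𝔈, ε₁, ε₂⁰, ε₂¹) be an hLie₂-algebra concentrated in non-positive degrees (𝔈_k = 0 for k > 0, so that ε₁ vanishes on 𝔈₀). Then for all x, y, z ∈ 𝔈₀: ε₁(ε₂¹(x, ε₂¹(y,z))) = ε₂¹(ε₂⁰(x,y), z) + ε₂¹(y, ε₂⁰(x,z)) − ε₂¹(x, ε₂⁰(y,z) + ε₂⁰(z,y)). -/
/-- In an hLie₂-algebra concentrated in non-positive degrees, for all `x, y, z ∈ 𝔈₀`: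
`ε₁(ε₂¹(x, ε₂¹(y,z))) = ε₂¹(ε₂⁰(x,y), z) + ε₂¹(y, ε₂⁰(x,z)) − ε₂¹(x, ε₂⁰(y,z) + ε₂⁰(z,y))`. -/
theorem hLie2_nonpos_alternator_identity
    (K : Type*) [Field K] [CharZero K] {E : Type*} [AddCommGroup E] [Module K E]
    (G : ℤ → Submodule K E) (e1 : E →ₗ[K] E) (e2 : ℤ → E →ₗ[K] E →ₗ[K] E)
    (hE : IsHLie2 K G e1 e2)
    (htrunc : ∀ k : ℤ, 0 < k → G k = ⊥) :
    ∀ x y z : E, x ∈ G 0 → y ∈ G 0 → z ∈ G 0 →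
      e1 (e2 1 x (e2 1 y z)) =
        e2 1 (e2 0 x y) z + e2 1 y (e2 0 x z) - e2 1 x (e2 0 y z + e2 0 z y) := by
  intro x y z hx hy hz
  have h1 : ∀ w : E, w ∈ G 0 → e1 w = 0 := by
    intro w hw
    have h : e1 w ∈ G 1 := by simpa using hE.e1_deg 0 w hw
    rw [htrunc 1 one_pos] at h
    simpa using h
  have e22 : e2 2 = 0 := hE.e2_zero 2 (by norm_num) (by norm_num)
  have hs0 : sgn K 0 = 1 := by simp [sgn]
  have hs1 : sgn K 1 = -1 := by simp [sgn, Int.negOnePow_one]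
  have hnum1 : (1:ℤ) + 1 = 2 := by norm_num
  have hnum2 : (1:ℤ) - 1 = 0 := by norm_num
  have hw : e2 1 y z ∈ G (-1) := by
    have := hE.e2_deg 1 0 0 y z hy hz
    simpa using this
  have hA : e1 (e2 1 y z) = e2 0 y z + e2 0 z y := by
    have h := hE.rel2 1 0 0 y z hy hz
    simp only [Nat.cast_one, h1 y hy, h1 z hz, hnum2, map_zero, LinearMap.zero_apply,
      smul_zero, add_zero, zero_add] at h
    norm_num [hs0, hs1] at h
    linear_combination (norm := module) h
  have hB : e2 0 (e2 1 y z) x = 0 := by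
    have h := hE.rel4 1 0 one_pos 0 0 0 y z x hy hz hx
    simp only [Nat.cast_one, Nat.cast_zero, hnum1, e22, LinearMap.zero_apply] at h
    simpa using h
  have hC : e2 1 (e2 0 x y) z = e2 0 x (e2 1 y z) - e2 1 y (e2 0 x z) := by
    have h := hE.rel5 1 0 one_pos 0 0 0 x y z hx hy hz
    simp only [Nat.cast_one, Nat.cast_zero, hnum1, e22, LinearMap.zero_apply] at h
    norm_num [hs0] at h
    exact h
  have h := hE.rel2 1 0 (-1) x (e2 1 y z) hx hw
  simp only [Nat.cast_one, h1 x hx, hA, hnum2, hB, map_zero, LinearMap.zero_apply,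
    smul_zero, zero_add] at h
  norm_num [hs0, hs1] at h
  rw [h, hC]
  simp only [map_add]
  abel
end

section
/- Let (𝔈, ε₁, ε₂⁰, ε₂¹) be an hLie₂-algebra concentrated in non-positive degrees (𝔈_k = 0 for k > 0, so that ε₁ vanishes on 𝔈₀). Then: (i) ε₂⁰(ε₂¹(a,b), c) = 0 for all homogeneous a, b, c ∈ 𝔈; and (ii) for all x, y ∈ 𝔈₀ and all homogeneous u ∈ 𝔈: ε₁(ε₂¹(x, ε₂¹(y,u))) = ε₂¹(x, ε₂¹(y, ε₁(u))) + ε₂¹(ε₂⁰(x,y), u) + ε₂¹(y, ε₂⁰(x,u)) − ε₂¹(x, ε₂⁰(y,u)) − ε₂¹(x, ε₂⁰(u,y)). -/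
/-- In an hLie₂-algebra concentrated in non-positive degrees:
(i) `ε₂⁰(ε₂¹(a,b), c) = 0` for all homogeneous `a, b, c`, and
(ii) for all `x, y ∈ 𝔈₀` and homogeneous `u`:
`ε₁(ε₂¹(x, ε₂¹(y,u))) = ε₂¹(x, ε₂¹(y, ε₁(u))) + ε₂¹(ε₂⁰(x,y), u) + ε₂¹(y, ε₂⁰(x,u))
  − ε₂¹(x, ε₂⁰(y,u)) − ε₂¹(x, ε₂⁰(u,y))`. -/
theorem hLie2_nonpos_higher_alternator_identities
    (K : Type*) [Field K] [CharZero K] {E : Type*} [AddCommGroup E] [Module K E]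
    (G : ℤ → Submodule K E) (e1 : E →ₗ[K] E) (e2 : ℤ → E →ₗ[K] E →ₗ[K] E)
    (hE : IsHLie2 K G e1 e2)
    (htrunc : ∀ k : ℤ, 0 < k → G k = ⊥) :
    (∀ (p q r : ℤ) (a b c : E), a ∈ G p → b ∈ G q → c ∈ G r →
      e2 0 (e2 1 a b) c = 0)
    ∧ (∀ (s : ℤ) (x y u : E), x ∈ G 0 → y ∈ G 0 → u ∈ G s →
      e1 (e2 1 x (e2 1 y u)) =
        e2 1 x (e2 1 y (e1 u)) + e2 1 (e2 0 x y) u + e2 1 y (e2 0 x u)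
          - e2 1 x (e2 0 y u) - e2 1 x (e2 0 u y)) := by
  obtain ⟨hz, hd1, hd2, r1, r2, r3, r4, r5⟩ := hE
  have e2m1 : e2 (-1) = 0 := hz (-1) (by norm_num) (by norm_num)
  have e2two : e2 2 = 0 := hz 2 (by norm_num) (by norm_num)
  have sgn1 : sgn K 1 = -1 := by simp [sgn]
  have sgn0 : sgn K 0 = 1 := by simp [sgn]
  have part1 : ∀ (p q r : ℤ) (a b c : E), a ∈ G p → b ∈ G q → c ∈ G r →
      e2 0 (e2 1 a b) c = 0 := by
    intro p q r a b c ha hb hc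
    have h := r4 1 0 (by norm_num) p q r a b c ha hb hc
    simpa [e2two] using h
  refine ⟨part1, ?_⟩
  intro s x y u hx hy hu
  have he1x : e1 x = 0 := by
    have h := hd1 0 x hx
    rw [show (0:ℤ)+1 = 1 by ring, htrunc 1 (by norm_num)] at h
    simpa using h
  have he1y : e1 y = 0 := by
    have h := hd1 0 y hy
    rw [show (0:ℤ)+1 = 1 by ring, htrunc 1 (by norm_num)] at h
    simpa using h
  have hw : e2 1 y u ∈ G (0 + s - 1) := hd2 1 0 s y u hy hu
  have h2a := r2 1 0 (0 + s - 1) x (e2 1 y u) hx hw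
  have h2b := r2 1 0 s y u hy hu
  have h5 := r5 1 0 (by norm_num) 0 0 s x y u hx hy hu
  have hp1 := part1 0 s 0 y u x hy hu hx
  simp only [Nat.cast_one, Nat.cast_zero, show ((1:ℤ)-1) = 0 by ring,
    show ((0:ℤ)-1) = -1 by ring, show ((1:ℤ)+1) = 2 by ring,
    he1x, he1y, sgn0, sgn1, one_smul,
    map_zero, LinearMap.zero_apply, zero_add, add_zero, sub_zero, smul_zero,
    e2m1, e2two, hp1,
    show (1 + (0:ℤ) * (s - 1)) = 1 by ring, show (1 + (0:ℤ) * s) = 1 by ring,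
    show ((1:ℤ) * 0) = 0 by ring, show ((0:ℤ) * 0) = 0 by ring] at h2a h2b h5
  rw [h2a, h2b, h5]
  simp only [map_add, map_sub, LinearMap.map_smul, map_smul, smul_add, smul_sub, smul_smul]
  module
end

section
/- Let (E₋₁, E₀, ε₁, ε₂, ε₃, alt) be a 2-term E₂L∞-algebra with alt = 0 (a semistrict 2-term E₂L∞-algebra). Then ε₂ is antisymmetric on E₀×E₀ and satisfies ε₂(x,y) = −ε₂(y,x) for x ∈ E₀, y ∈ E₋₁, the map ε₃ is totally antisymmetric, and (E₋₁, E₀, μ₁ := ε₁, μ₂ := ε₂, μ₃ := ε₃) is a 2-term L∞-algebra. -/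
/-- A 2-term E₂L∞-algebra with trivial alternator (a semistrict 2-term E₂L∞-algebra)
has antisymmetric `ε₂` (also in mixed degrees, via `ε₂(x,y) = −ε₂(y,x)`),
totally antisymmetric `ε₃`, and `(E₋₁, E₀, ε₁, ε₂, ε₃)` is a 2-term L∞-algebra. -/
theorem semistrict_2term_E2LInfty_is_LInfty
    (K : Type*) [Field K] [CharZero K]
    {Em1 E0 : Type*} [AddCommGroup Em1] [Module K Em1] [AddCommGroup E0] [Module K E0]
    (e1 : Em1 → E0) (e2 : E0 → E0 → E0) (e2r : E0 → Em1 → Em1) (e2l : Em1 → E0 → Em1)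
    (e3 : E0 → E0 → E0 → Em1) (alt : E0 → E0 → Em1)
    (h : Is2TermE2LInfty K e1 e2 e2r e2l e3 alt)
    (halt : ∀ x₁ x₂ : E0, alt x₁ x₂ = 0) :
    (∀ x₁ x₂ : E0, e2 x₁ x₂ = - e2 x₂ x₁)
    ∧ (∀ (x : E0) (y : Em1), e2r x y = - e2l y x)
    ∧ (∀ x₁ x₂ x₃ : E0, e3 x₁ x₂ x₃ = - e3 x₂ x₁ x₃)
    ∧ (∀ x₁ x₂ x₃ : E0, e3 x₁ x₂ x₃ = - e3 x₁ x₃ x₂)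
    ∧ Is2TermLInfty K e1 e2 e2r e3 := by
  have hz1 : e1 0 = 0 := h.lin_e1.map_zero
  have a2 : ∀ x₁ x₂ : E0, e2 x₁ x₂ = - e2 x₂ x₁ := by
    intro x₁ x₂
    have h0 := h.E2a x₁ x₂
    rw [halt, hz1] at h0
    exact eq_neg_of_add_eq_zero_left h0
  have ar : ∀ (x : E0) (y : Em1), e2r x y = - e2l y x := by
    intro x y
    have h0 := h.E2b x y
    rw [halt] at h0
    exact eq_neg_of_add_eq_zero_left h0
  have a312 : ∀ x₁ x₂ x₃ : E0, e3 x₁ x₂ x₃ = - e3 x₂ x₁ x₃ := by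
    intro x₁ x₂ x₃
    have h0 := h.E5 x₁ x₂ x₃
    rw [halt, (h.lin_e2l_left x₃).map_zero] at h0
    exact eq_neg_of_add_eq_zero_left h0
  have a323 : ∀ x₁ x₂ x₃ : E0, e3 x₁ x₂ x₃ = - e3 x₁ x₃ x₂ := by
    intro x₁ x₂ x₃
    have h0 := h.E6 x₁ x₂ x₃
    rw [halt, halt, halt, (h.lin_e2r_right x₁).map_zero] at h0
    simp only [add_zero, zero_add, sub_zero, zero_sub, neg_zero] at h0
    exact eq_neg_of_add_eq_zero_left h0
  refine ⟨a2, ar, a312, a323, ?_⟩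
  refine
    { lin_m1 := h.lin_e1
      lin_m2_left := h.lin_e2_left
      lin_m2_right := h.lin_e2_right
      lin_m2r_left := h.lin_e2r_left
      lin_m2r_right := h.lin_e2r_right
      lin_m3_1 := h.lin_e3_1
      lin_m3_2 := h.lin_e3_2
      lin_m3_3 := h.lin_e3_3
      m2_antisym := a2
      m3_antisym12 := a312
      m3_antisym23 := a323
      L1 := h.E1a
      L2 := ?_
      L3 := ?_
      L4 := ?_
      L5 := ?_ }
  · -- L2
    intro y₁ y₂
    have h0 := h.E2b (e1 y₂) y₁
    rw [halt] at h0
    rw [← h.E1c y₁ y₂] at h0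
    linear_combination (norm := abel) h0
  · -- L3
    intro x₁ x₂ x₃
    have h0 := h.E3a x₁ x₂ x₃
    rw [a2 (e2 x₁ x₂) x₃, a2 x₁ x₃, (h.lin_e2_right x₂).map_neg] at h0
    linear_combination (norm := abel) h0
  · -- L4
    intro x₁ x₂ y
    have h0 := h.E3b x₁ x₂ y
    linear_combination (norm := abel) h0
  · -- L5
    intro x₁ x₂ x₃ x₄
    have h0 := h.E7 x₁ x₂ x₃ x₄
    have r1 : e3 x₁ (e2 x₂ x₃) x₄ = - e3 (e2 x₂ x₃) x₁ x₄ := a312 _ _ _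
    have r2 : e3 x₁ x₃ (e2 x₂ x₄) = e3 (e2 x₂ x₄) x₁ x₃ := by
      rw [a323 x₁ x₃ (e2 x₂ x₄), a312 x₁ (e2 x₂ x₄) x₃, neg_neg]
    have r3 : e2l (e3 x₁ x₂ x₃) x₄ = - e2r x₄ (e3 x₁ x₂ x₃) := by
      rw [ar x₄ (e3 x₁ x₂ x₃), neg_neg]
    have r4 : e3 x₁ x₂ (e2 x₃ x₄) = e3 (e2 x₃ x₄) x₁ x₂ := by
      rw [a323 x₁ x₂ (e2 x₃ x₄), a312 x₁ (e2 x₃ x₄) x₂, neg_neg]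
    have r5 : e3 x₂ (e2 x₁ x₃) x₄ = - e3 (e2 x₁ x₃) x₂ x₄ := a312 _ _ _
    have r6 : e3 x₂ x₃ (e2 x₁ x₄) = e3 (e2 x₁ x₄) x₂ x₃ := by
      rw [a323 x₂ x₃ (e2 x₁ x₄), a312 x₂ (e2 x₁ x₄) x₃, neg_neg]
    rw [r1, r2, r3, r4, r5, r6] at h0
    linear_combination (norm := abel) -h0
end

section
/- Let (𝔤, d, {−,−}) be a differential graded Lie algebra. Then the derived bracket x ∘ y := {d(x), y} defines a binary operation on 𝔤₋₁ (it maps 𝔤₋₁ × 𝔤₋₁ to 𝔤₋₁) which satisfies the left Leibniz identity: x ∘ (y ∘ z) = (x ∘ y) ∘ z + y ∘ (x ∘ z) for all x, y, z ∈ 𝔤₋₁. -/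
/-- In a differential graded Lie algebra `(𝔤, d, {−,−})`, the derived bracket
`x ∘ y := {d x, y}` maps `𝔤₋₁ × 𝔤₋₁` to `𝔤₋₁` and satisfies the left Leibniz
identity `x ∘ (y ∘ z) = (x ∘ y) ∘ z + y ∘ (x ∘ z)` on `𝔤₋₁`. -/
theorem derived_bracket_leibniz
    (K : Type*) [Field K] {V : Type*} [AddCommGroup V] [Module K V]
    (G : ℤ → Submodule K V) (d : V →ₗ[K] V) (br : V →ₗ[K] V →ₗ[K] V)
    (hg : IsDGLA K G d br) :
    (∀ x y : V, x ∈ G (-1) → y ∈ G (-1) → br (d x) y ∈ G (-1))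
    ∧ (∀ x y z : V, x ∈ G (-1) → y ∈ G (-1) → z ∈ G (-1) →
        br (d x) (br (d y) z) = br (d (br (d x) y)) z + br (d y) (br (d x) z)) := by
  have hs0 : sgn K 0 = 1 := by simp [sgn]
  constructor
  · intro x y hx hy
    have := hg.br_deg 0 (-1) (d x) y (by simpa using hg.d_deg (-1) x hx) hy
    simpa using this
  · intro x y z hx hy hz
    have hdx : d x ∈ G 0 := by simpa using hg.d_deg (-1) x hx
    have hdy : d y ∈ G 0 := by simpa using hg.d_deg (-1) y hy
    have hd : d (br (d x) y) = br (d x) (d y) := by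
      rw [hg.leibniz 0 (-1) (d x) y hdx hy, hg.d_sq (-1) x hx, hs0]
      simp
    rw [hd]
    have hj := hg.jacobi 0 0 (-1) (d x) (d y) z hdx hdy hz
    rw [hj]
    simp [hs0]
end
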